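/- arXiv:1105.5938 — 3 statements merged into one kernel-verified Lean document; each statement's English description precedes it below -/
import Mathlib

section
/- A bounded function f : [a,b] → ℝ is Riemann integrable on [a,b] if and only if any two generalized primitives of f differ by a constant, i.e., for all generalized primitives F, G of f there exists c ∈ ℝ with F(x) = G(x) + c for all x ∈ [a,b]. -/
noncomputable section

/-- A partition of `[a, b]` given by points `x 0 = a < x 1 < ⋯ < x n = b`. -/
def IsPartition (a b : ℝ) (n : ℕ) (x : ℕ → ℝ) : Prop :=
  x 0 = a ∧ x n = b ∧ ∀ i < n, x i < x (i + 1)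

/-- The lower Darboux sum of `f` associated to the partition points `x 0, …, x n`. -/
noncomputable def lowerSum (f : ℝ → ℝ) (n : ℕ) (x : ℕ → ℝ) : ℝ :=
  ∑ i ∈ Finset.range n, sInf (f '' Set.Icc (x i) (x (i + 1))) * (x (i + 1) - x i)

/-- The upper Darboux sum of `f` associated to the partition points `x 0, …, x n`. -/
noncomputable def upperSum (f : ℝ → ℝ) (n : ℕ) (x : ℕ → ℝ) : ℝ :=
  ∑ i ∈ Finset.range n, sSup (f '' Set.Icc (x i) (x (i + 1))) * (x (i + 1) - x i)

/-- The lower Darboux integral of `f` over `[a, b]`: the supremum of the lower sums. -/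
noncomputable def lowerDarboux (f : ℝ → ℝ) (a b : ℝ) : ℝ :=
  sSup {s : ℝ | ∃ n x, IsPartition a b n x ∧ s = lowerSum f n x}

/-- The upper Darboux integral of `f` over `[a, b]`: the infimum of the upper sums. -/
noncomputable def upperDarboux (f : ℝ → ℝ) (a b : ℝ) : ℝ :=
  sInf {s : ℝ | ∃ n x, IsPartition a b n x ∧ s = upperSum f n x}

/-- `f` is bounded on the set `s`. -/
def BoundedOn (f : ℝ → ℝ) (s : Set ℝ) : Prop := ∃ M : ℝ, ∀ x ∈ s, |f x| ≤ M

/-- `f` is Riemann integrable on `[a, b]`: it is bounded there and its lower and upper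
Darboux integrals coincide. -/
def RiemannIntegrableOn (f : ℝ → ℝ) (a b : ℝ) : Prop :=
  BoundedOn f (Set.Icc a b) ∧ lowerDarboux f a b = upperDarboux f a b

/-- The oriented Riemann integral `∫_u^v f`: for `u ≤ v` it is the (lower) Darboux integral
over `[u, v]` (equal to the upper one when `f` is Riemann integrable, and `0` when `u = v`),
and for `v < u` it is minus the integral over `[v, u]`. -/
noncomputable def riemannIntegral (f : ℝ → ℝ) (u v : ℝ) : ℝ :=
  if u ≤ v then lowerDarboux f u v else -lowerDarboux f v u

/-- `F` is a generalized primitive of `f` on `[a, b]`: for all `x < y` in `[a, b]`,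
`inf_{[x,y]} f ≤ (F y - F x)/(y - x) ≤ sup_{[x,y]} f`. -/
def IsGenPrimitive (a b : ℝ) (f F : ℝ → ℝ) : Prop :=
  ∀ x ∈ Set.Icc a b, ∀ y ∈ Set.Icc a b, x < y →
    sInf (f '' Set.Icc x y) ≤ (F y - F x) / (y - x) ∧
      (F y - F x) / (y - x) ≤ sSup (f '' Set.Icc x y)

/-! ### Auxiliary lemmas -/

section Aux

variable {f : ℝ → ℝ} {u v c : ℝ}

private lemma my_bdd_mono {s t : Set ℝ} (h : BoundedOn f t) (hst : s ⊆ t) : BoundedOn f s := by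
  obtain ⟨M, hM⟩ := h
  exact ⟨M, fun x hx => hM x (hst hx)⟩

private lemma my_img_ne (h : u ≤ v) : (f '' Set.Icc u v).Nonempty :=
  ⟨f u, ⟨u, Set.left_mem_Icc.2 h, rfl⟩⟩

private lemma my_img_bddAbove (hb : BoundedOn f (Set.Icc u v)) : BddAbove (f '' Set.Icc u v) := by
  obtain ⟨M, hM⟩ := hb
  refine ⟨M, ?_⟩
  rintro y ⟨x, hx, rfl⟩
  exact (abs_le.1 (hM x hx)).2

private lemma my_img_bddBelow (hb : BoundedOn f (Set.Icc u v)) : BddBelow (f '' Set.Icc u v) := by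
  obtain ⟨M, hM⟩ := hb
  refine ⟨-M, ?_⟩
  rintro y ⟨x, hx, rfl⟩
  exact (abs_le.1 (hM x hx)).1

private lemma my_sInf_le (hb : BoundedOn f (Set.Icc u v)) {z : ℝ} (hz : z ∈ Set.Icc u v) :
    sInf (f '' Set.Icc u v) ≤ f z :=
  csInf_le (my_img_bddBelow hb) ⟨z, hz, rfl⟩

private lemma my_le_sSup (hb : BoundedOn f (Set.Icc u v)) {z : ℝ} (hz : z ∈ Set.Icc u v) :
    f z ≤ sSup (f '' Set.Icc u v) :=
  le_csSup (my_img_bddAbove hb) ⟨z, hz, rfl⟩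

private lemma my_sInf_mono {u' v' : ℝ} (hb : BoundedOn f (Set.Icc u v))
    (h : Set.Icc u' v' ⊆ Set.Icc u v) (h' : u' ≤ v') :
    sInf (f '' Set.Icc u v) ≤ sInf (f '' Set.Icc u' v') :=
  csInf_le_csInf (my_img_bddBelow hb) (my_img_ne h') (Set.image_mono (f := f) h)

private lemma my_sSup_mono {u' v' : ℝ} (hb : BoundedOn f (Set.Icc u v))
    (h : Set.Icc u' v' ⊆ Set.Icc u v) (h' : u' ≤ v') :
    sSup (f '' Set.Icc u' v') ≤ sSup (f '' Set.Icc u v) :=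
  csSup_le_csSup (my_img_bddAbove hb) (my_img_ne h') (Set.image_mono (f := f) h)

/-! ### Partition facts -/

private lemma my_part_mono {n : ℕ} {x : ℕ → ℝ} (h : IsPartition u v n x) :
    ∀ i j, i ≤ j → j ≤ n → x i ≤ x j := by
  intro i j hij hjn
  induction j with
  | zero => rw [Nat.le_zero.1 hij]
  | succ k ih =>
    rcases Nat.eq_or_lt_of_le hij with rfl | hlt
    · exact le_rfl
    · exact (ih (Nat.lt_succ_iff.1 hlt) (le_trans (Nat.le_succ k) hjn)).trans
        (h.2.2 k (by omega)).le

private lemma my_part_mem {n : ℕ} {x : ℕ → ℝ} (h : IsPartition u v n x) {i : ℕ} (hi : i ≤ n) :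
    x i ∈ Set.Icc u v := by
  constructor
  · rw [← h.1]; exact my_part_mono h 0 i (Nat.zero_le i) hi
  · rw [← h.2.1]; exact my_part_mono h i n hi le_rfl

private lemma my_part_le {n : ℕ} {x : ℕ → ℝ} (h : IsPartition u v n x) : u ≤ v := by
  rw [← h.1, ← h.2.1]
  exact my_part_mono h 0 n (Nat.zero_le n) le_rfl

private lemma my_trivPart (h : u < v) : IsPartition u v 1 (fun i => if i = 0 then u else v) := by
  refine ⟨by simp, by simp, ?_⟩
  intro i hi
  interval_cases i
  simpa using h

private lemma my_trivLowerSum :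
    lowerSum f 1 (fun i => if i = 0 then u else v) = sInf (f '' Set.Icc u v) * (v - u) := by
  simp [lowerSum]

private lemma my_trivUpperSum :
    upperSum f 1 (fun i => if i = 0 then u else v) = sSup (f '' Set.Icc u v) * (v - u) := by
  simp [upperSum]

/-! ### Bounds on Darboux sums -/

private lemma my_lowerSum_le {n : ℕ} {x : ℕ → ℝ} (hb : BoundedOn f (Set.Icc u v))
    (h : IsPartition u v n x) :
    lowerSum f n x ≤ sSup (f '' Set.Icc u v) * (v - u) := by
  have key : ∀ i ∈ Finset.range n,
      sInf (f '' Set.Icc (x i) (x (i + 1))) * (x (i + 1) - x i)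
        ≤ sSup (f '' Set.Icc u v) * (x (i + 1) - x i) := by
    intro i hi
    have hi' : i < n := Finset.mem_range.1 hi
    have h1 : x i < x (i + 1) := h.2.2 i hi'
    have hsub : Set.Icc (x i) (x (i + 1)) ⊆ Set.Icc u v :=
      Set.Icc_subset_Icc (my_part_mem h hi'.le).1 (my_part_mem h hi').2
    refine mul_le_mul_of_nonneg_right ?_ (by linarith)
    calc sInf (f '' Set.Icc (x i) (x (i + 1))) ≤ f (x i) :=
          my_sInf_le (my_bdd_mono hb hsub) (Set.left_mem_Icc.2 h1.le)
      _ ≤ sSup (f '' Set.Icc u v) := my_le_sSup hb (hsub (Set.left_mem_Icc.2 h1.le))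
  calc lowerSum f n x ≤ ∑ i ∈ Finset.range n, sSup (f '' Set.Icc u v) * (x (i + 1) - x i) :=
        Finset.sum_le_sum key
    _ = sSup (f '' Set.Icc u v) * (v - u) := by
        rw [← Finset.mul_sum, Finset.sum_range_sub (fun i => x i), h.1, h.2.1]

private lemma my_le_upperSum {n : ℕ} {x : ℕ → ℝ} (hb : BoundedOn f (Set.Icc u v))
    (h : IsPartition u v n x) :
    sInf (f '' Set.Icc u v) * (v - u) ≤ upperSum f n x := by
  have key : ∀ i ∈ Finset.range n,
      sInf (f '' Set.Icc u v) * (x (i + 1) - x i)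
        ≤ sSup (f '' Set.Icc (x i) (x (i + 1))) * (x (i + 1) - x i) := by
    intro i hi
    have hi' : i < n := Finset.mem_range.1 hi
    have h1 : x i < x (i + 1) := h.2.2 i hi'
    have hsub : Set.Icc (x i) (x (i + 1)) ⊆ Set.Icc u v :=
      Set.Icc_subset_Icc (my_part_mem h hi'.le).1 (my_part_mem h hi').2
    refine mul_le_mul_of_nonneg_right ?_ (by linarith)
    calc sInf (f '' Set.Icc u v) ≤ f (x i) := my_sInf_le hb (hsub (Set.left_mem_Icc.2 h1.le))
      _ ≤ sSup (f '' Set.Icc (x i) (x (i + 1))) :=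
          my_le_sSup (my_bdd_mono hb hsub) (Set.left_mem_Icc.2 h1.le)
  calc sInf (f '' Set.Icc u v) * (v - u)
      = ∑ i ∈ Finset.range n, sInf (f '' Set.Icc u v) * (x (i + 1) - x i) := by
        rw [← Finset.mul_sum, Finset.sum_range_sub (fun i => x i), h.1, h.2.1]
    _ ≤ upperSum f n x := Finset.sum_le_sum key

/-! ### The Darboux sets -/

private lemma my_lowerSet_ne (h : u ≤ v) :
    {s : ℝ | ∃ n x, IsPartition u v n x ∧ s = lowerSum f n x}.Nonempty := by
  rcases eq_or_lt_of_le h with rfl | h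
  · exact ⟨0, 0, fun _ => u, ⟨rfl, rfl, by omega⟩, by simp [lowerSum]⟩
  · exact ⟨_, 1, _, my_trivPart h, rfl⟩

private lemma my_upperSet_ne (h : u ≤ v) :
    {s : ℝ | ∃ n x, IsPartition u v n x ∧ s = upperSum f n x}.Nonempty := by
  rcases eq_or_lt_of_le h with rfl | h
  · exact ⟨0, 0, fun _ => u, ⟨rfl, rfl, by omega⟩, by simp [upperSum]⟩
  · exact ⟨_, 1, _, my_trivPart h, rfl⟩

private lemma my_lowerSet_bddAbove (hb : BoundedOn f (Set.Icc u v)) :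
    BddAbove {s : ℝ | ∃ n x, IsPartition u v n x ∧ s = lowerSum f n x} := by
  refine ⟨sSup (f '' Set.Icc u v) * (v - u), ?_⟩
  rintro s ⟨n, x, hx, rfl⟩
  exact my_lowerSum_le hb hx

private lemma my_upperSet_bddBelow (hb : BoundedOn f (Set.Icc u v)) :
    BddBelow {s : ℝ | ∃ n x, IsPartition u v n x ∧ s = upperSum f n x} := by
  refine ⟨sInf (f '' Set.Icc u v) * (v - u), ?_⟩
  rintro s ⟨n, x, hx, rfl⟩
  exact my_le_upperSum hb hx

private lemma my_part_self {n : ℕ} {x : ℕ → ℝ} (hx : IsPartition u u n x) : n = 0 := by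
  by_contra hn
  have h1 := my_part_mono hx 1 n (by omega) le_rfl
  have h01 := hx.2.2 0 (by omega)
  rw [hx.1] at h01
  rw [hx.2.1] at h1
  linarith

private lemma my_lowerDarboux_self (f : ℝ → ℝ) (u : ℝ) : lowerDarboux f u u = 0 := by
  have hset : {s : ℝ | ∃ n x, IsPartition u u n x ∧ s = lowerSum f n x} = {0} := by
    ext s
    constructor
    · rintro ⟨n, x, hx, rfl⟩
      have hn := my_part_self hx
      subst hn
      simp [lowerSum]
    · rintro rfl
      exact ⟨0, fun _ => u, ⟨rfl, rfl, by omega⟩, by simp [lowerSum]⟩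
  rw [lowerDarboux, hset, csSup_singleton]

private lemma my_upperDarboux_self (f : ℝ → ℝ) (u : ℝ) : upperDarboux f u u = 0 := by
  have hset : {s : ℝ | ∃ n x, IsPartition u u n x ∧ s = upperSum f n x} = {0} := by
    ext s
    constructor
    · rintro ⟨n, x, hx, rfl⟩
      have hn := my_part_self hx
      subst hn
      simp [upperSum]
    · rintro rfl
      exact ⟨0, fun _ => u, ⟨rfl, rfl, by omega⟩, by simp [upperSum]⟩
  rw [upperDarboux, hset, csInf_singleton]

private lemma my_lowerDarboux_le (hb : BoundedOn f (Set.Icc u v)) (h : u ≤ v) :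
    lowerDarboux f u v ≤ sSup (f '' Set.Icc u v) * (v - u) := by
  refine csSup_le (my_lowerSet_ne h) ?_
  rintro s ⟨n, x, hx, rfl⟩
  exact my_lowerSum_le hb hx

private lemma my_le_upperDarboux (hb : BoundedOn f (Set.Icc u v)) (h : u ≤ v) :
    sInf (f '' Set.Icc u v) * (v - u) ≤ upperDarboux f u v := by
  refine le_csInf (my_upperSet_ne h) ?_
  rintro s ⟨n, x, hx, rfl⟩
  exact my_le_upperSum hb hx

private lemma my_le_lowerDarboux (hb : BoundedOn f (Set.Icc u v)) (h : u ≤ v) :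
    sInf (f '' Set.Icc u v) * (v - u) ≤ lowerDarboux f u v := by
  rcases eq_or_lt_of_le h with rfl | h
  · rw [my_lowerDarboux_self]; simp
  · have := le_csSup (my_lowerSet_bddAbove hb) (Set.mem_setOf.2 ⟨1, _, my_trivPart h, rfl⟩)
    rw [my_trivLowerSum] at this
    exact this

private lemma my_upperDarboux_le (hb : BoundedOn f (Set.Icc u v)) (h : u ≤ v) :
    upperDarboux f u v ≤ sSup (f '' Set.Icc u v) * (v - u) := by
  rcases eq_or_lt_of_le h with rfl | h
  · rw [my_upperDarboux_self]; simp
  · have := csInf_le (my_upperSet_bddBelow hb) (Set.mem_setOf.2 ⟨1, _, my_trivPart h, rfl⟩)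
    rw [my_trivUpperSum] at this
    exact this

end Aux

section Aux2

variable {f : ℝ → ℝ} {u v c : ℝ}

private lemma my_sum_split (g : ℕ → ℝ) (n m : ℕ) :
    ∑ i ∈ Finset.range (n + m), g i
      = ∑ i ∈ Finset.range n, g i + ∑ i ∈ Finset.range m, g (n + i) := by
  rw [← Finset.sum_range_add_sum_Ico g (Nat.le_add_right n m), Finset.sum_Ico_eq_sum_range]
  simp

private lemma my_concat {n m : ℕ} {x y : ℕ → ℝ}
    (hx : IsPartition u c n x) (hy : IsPartition c v m y) (hn : 0 < n) :
    IsPartition u v (n + m) (fun i => if i < n then x i else y (i - n)) ∧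
      lowerSum f (n + m) (fun i => if i < n then x i else y (i - n))
        = lowerSum f n x + lowerSum f m y ∧
      upperSum f (n + m) (fun i => if i < n then x i else y (i - n))
        = upperSum f n x + upperSum f m y := by
  set z : ℕ → ℝ := fun i => if i < n then x i else y (i - n) with hzdef
  have hz : ∀ i ≤ n, z i = x i := by
    intro i hi
    rcases Nat.lt_or_ge i n with h | h
    · simp [hzdef, h]
    · have : i = n := le_antisymm hi h
      subst this
      simp [hzdef, hy.1, hx.2.1]
  have hz' : ∀ i, z (n + i) = y i := by
    intro i
    simp [hzdef]
  have hpart : IsPartition u v (n + m) z := by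
    refine ⟨?_, ?_, ?_⟩
    · rw [hz 0 (Nat.zero_le n), hx.1]
    · rw [hz' m, hy.2.1]
    · intro i hi
      rcases Nat.lt_or_ge (i + 1) n with h | h
      · rw [hz i (by omega), hz (i + 1) (by omega)]
        exact hx.2.2 i (by omega)
      · rcases Nat.lt_or_ge i n with h2 | h2
        · have : i + 1 = n := by omega
          rw [hz i (by omega), hz (i + 1) (by omega)]
          exact hx.2.2 i h2
        · have e1 : i = n + (i - n) := by omega
          have e2 : i + 1 = n + (i - n + 1) := by omega
          have a1 := hz' (i - n)
          have a2 := hz' (i - n + 1)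
          rw [← e1] at a1
          rw [← e2] at a2
          rw [a1, a2]
          exact hy.2.2 (i - n) (by omega)
  refine ⟨hpart, ?_, ?_⟩
  · rw [lowerSum, my_sum_split]
    congr 1
    · refine Finset.sum_congr rfl ?_
      intro i hi
      have hi' := Finset.mem_range.1 hi
      rw [hz i hi'.le, hz (i + 1) (by omega)]
    · refine Finset.sum_congr rfl ?_
      intro i hi
      rw [hz' i, show n + i + 1 = n + (i + 1) from by omega, hz' (i + 1)]
  · rw [upperSum, my_sum_split]
    congr 1
    · refine Finset.sum_congr rfl ?_
      intro i hi
      have hi' := Finset.mem_range.1 hi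
      rw [hz i hi'.le, hz (i + 1) (by omega)]
    · refine Finset.sum_congr rfl ?_
      intro i hi
      rw [hz' i, show n + i + 1 = n + (i + 1) from by omega, hz' (i + 1)]

private lemma my_part_pos {n : ℕ} {x : ℕ → ℝ} (hx : IsPartition u v n x) (h : u < v) : 0 < n := by
  rcases Nat.eq_zero_or_pos n with rfl | hn
  · rw [← hx.1, hx.2.1] at h
    exact absurd h (lt_irrefl v)
  · exact hn

private lemma my_lower_superadd (hb : BoundedOn f (Set.Icc u v)) (h1 : u ≤ c) (h2 : c ≤ v) :
    lowerDarboux f u c + lowerDarboux f c v ≤ lowerDarboux f u v := by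
  rcases eq_or_lt_of_le h1 with rfl | h1
  · rw [my_lowerDarboux_self]; simp
  rcases eq_or_lt_of_le h2 with rfl | h2
  · rw [my_lowerDarboux_self]; simp
  have hA := my_lowerSet_ne (f := f) h1.le
  have hB := my_lowerSet_ne (f := f) h2.le
  have hC := my_lowerSet_bddAbove hb
  have key : ∀ s ∈ {s : ℝ | ∃ n x, IsPartition u c n x ∧ s = lowerSum f n x},
      ∀ t ∈ {s : ℝ | ∃ n x, IsPartition c v n x ∧ s = lowerSum f n x},
      s + t ≤ lowerDarboux f u v := by
    rintro s ⟨n, x, hx, rfl⟩ t ⟨m, y, hy, rfl⟩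
    obtain ⟨hz, hsum, -⟩ := my_concat (f := f) hx hy (my_part_pos hx h1)
    exact le_csSup hC ⟨n + m, _, hz, hsum.symm⟩
  have h3 : ∀ t ∈ {s : ℝ | ∃ n x, IsPartition c v n x ∧ s = lowerSum f n x},
      lowerDarboux f u c ≤ lowerDarboux f u v - t := fun t ht =>
    csSup_le hA fun s hs => le_sub_iff_add_le.2 (key s hs t ht)
  have h4 : lowerDarboux f c v ≤ lowerDarboux f u v - lowerDarboux f u c :=
    csSup_le hB fun t ht => by have := h3 t ht; linarith
  linarith

private lemma my_upper_subadd (hb : BoundedOn f (Set.Icc u v)) (h1 : u ≤ c) (h2 : c ≤ v) :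
    upperDarboux f u v ≤ upperDarboux f u c + upperDarboux f c v := by
  rcases eq_or_lt_of_le h1 with rfl | h1
  · rw [my_upperDarboux_self]; simp
  rcases eq_or_lt_of_le h2 with rfl | h2
  · rw [my_upperDarboux_self]; simp
  have hA := my_upperSet_ne (f := f) h1.le
  have hB := my_upperSet_ne (f := f) h2.le
  have hC := my_upperSet_bddBelow hb
  have key : ∀ s ∈ {s : ℝ | ∃ n x, IsPartition u c n x ∧ s = upperSum f n x},
      ∀ t ∈ {s : ℝ | ∃ n x, IsPartition c v n x ∧ s = upperSum f n x},
      upperDarboux f u v ≤ s + t := by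
    rintro s ⟨n, x, hx, rfl⟩ t ⟨m, y, hy, rfl⟩
    obtain ⟨hz, -, hsum⟩ := my_concat (f := f) hx hy (my_part_pos hx h1)
    exact csInf_le hC ⟨n + m, _, hz, hsum.symm⟩
  have h3 : ∀ t ∈ {s : ℝ | ∃ n x, IsPartition c v n x ∧ s = upperSum f n x},
      upperDarboux f u v - t ≤ upperDarboux f u c := fun t ht =>
    le_csInf hA fun s hs => sub_le_iff_le_add.2 (key s hs t ht)
  have h4 : upperDarboux f u v - upperDarboux f u c ≤ upperDarboux f c v :=
    le_csInf hB fun t ht => by have := h3 t ht; linarith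
  linarith

end Aux2
section Aux3

variable {f : ℝ → ℝ} {u v c : ℝ}

private lemma my_shift_part {n : ℕ} {x : ℕ → ℝ} (hx : IsPartition u v (n + 1) x) :
    IsPartition (x 1) v n (fun i => x (i + 1)) :=
  ⟨rfl, hx.2.1, fun i hi => hx.2.2 (i + 1) (by omega)⟩

private lemma my_lowerSum_shift {n : ℕ} {x : ℕ → ℝ} :
    lowerSum f (n + 1) x
      = sInf (f '' Set.Icc (x 0) (x 1)) * (x 1 - x 0) + lowerSum f n (fun i => x (i + 1)) := by
  rw [lowerSum, Finset.sum_range_succ'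
    (fun i => sInf (f '' Set.Icc (x i) (x (i + 1))) * (x (i + 1) - x i)) n]
  rw [add_comm, lowerSum]

private lemma my_upperSum_shift {n : ℕ} {x : ℕ → ℝ} :
    upperSum f (n + 1) x
      = sSup (f '' Set.Icc (x 0) (x 1)) * (x 1 - x 0) + upperSum f n (fun i => x (i + 1)) := by
  rw [upperSum, Finset.sum_range_succ'
    (fun i => sSup (f '' Set.Icc (x i) (x (i + 1))) * (x (i + 1) - x i)) n]
  rw [add_comm, upperSum]

private lemma my_lowerSum_le_add :
    ∀ (n : ℕ) (u : ℝ) (x : ℕ → ℝ), BoundedOn f (Set.Icc u v) → IsPartition u v n x →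
      ∀ c, u ≤ c → c ≤ v → lowerSum f n x ≤ lowerDarboux f u c + lowerDarboux f c v := by
  intro n
  induction n with
  | zero =>
    intro u x hb hx c h1 h2
    have huv : u = v := by rw [← hx.1, hx.2.1]
    have hcu : c = u := le_antisymm (huv ▸ h2) h1
    subst hcu
    subst huv
    simp [lowerSum, my_lowerDarboux_self]
  | succ n ih =>
    intro u x hb hx c h1 h2
    have hx0 : x 0 = u := hx.1
    have huu' : u < x 1 := by rw [← hx0]; exact hx.2.2 0 (Nat.succ_pos n)
    have hu'v : x 1 ≤ v := (my_part_mem hx (show 1 ≤ n + 1 by omega)).2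
    have hy := my_shift_part hx
    have hbuu' : BoundedOn f (Set.Icc u (x 1)) :=
      my_bdd_mono hb (Set.Icc_subset_Icc le_rfl hu'v)
    have hbu'v : BoundedOn f (Set.Icc (x 1) v) :=
      my_bdd_mono hb (Set.Icc_subset_Icc huu'.le le_rfl)
    have hsplit : lowerSum f (n + 1) x
        = sInf (f '' Set.Icc u (x 1)) * (x 1 - u) + lowerSum f n (fun i => x (i + 1)) := by
      rw [my_lowerSum_shift, hx0]
    rcases le_or_gt c (x 1) with hc | hc
    · have hbcu' : BoundedOn f (Set.Icc c (x 1)) :=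
        my_bdd_mono hbuu' (Set.Icc_subset_Icc h1 le_rfl)
      have hbuc : BoundedOn f (Set.Icc u c) :=
        my_bdd_mono hbuu' (Set.Icc_subset_Icc le_rfl hc)
      have t1 : sInf (f '' Set.Icc u (x 1)) * (x 1 - u)
          ≤ lowerDarboux f u c + lowerDarboux f c (x 1) := by
        have m1 : sInf (f '' Set.Icc u (x 1)) ≤ sInf (f '' Set.Icc u c) :=
          my_sInf_mono hbuu' (Set.Icc_subset_Icc le_rfl hc) h1
        have m2 : sInf (f '' Set.Icc u (x 1)) ≤ sInf (f '' Set.Icc c (x 1)) :=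
          my_sInf_mono hbuu' (Set.Icc_subset_Icc h1 le_rfl) hc
        have b1 : sInf (f '' Set.Icc u c) * (c - u) ≤ lowerDarboux f u c :=
          my_le_lowerDarboux hbuc h1
        have b2 : sInf (f '' Set.Icc c (x 1)) * (x 1 - c) ≤ lowerDarboux f c (x 1) :=
          my_le_lowerDarboux hbcu' hc
        nlinarith [mul_le_mul_of_nonneg_right m1 (sub_nonneg.2 h1),
          mul_le_mul_of_nonneg_right m2 (sub_nonneg.2 hc)]
      have t2 : lowerSum f n (fun i => x (i + 1)) ≤ lowerDarboux f (x 1) v :=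
        le_csSup (my_lowerSet_bddAbove hbu'v) ⟨n, _, hy, rfl⟩
      have t3 : lowerDarboux f c (x 1) + lowerDarboux f (x 1) v ≤ lowerDarboux f c v :=
        my_lower_superadd (my_bdd_mono hb (Set.Icc_subset_Icc h1 le_rfl)) hc hu'v
      linarith [hsplit.le, hsplit.ge, t1, t2, t3, hsplit]
    · have t1 : sInf (f '' Set.Icc u (x 1)) * (x 1 - u) ≤ lowerDarboux f u (x 1) :=
        my_le_lowerDarboux hbuu' huu'.le
      have t2 : lowerSum f n (fun i => x (i + 1))
          ≤ lowerDarboux f (x 1) c + lowerDarboux f c v :=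
        ih (x 1) _ hbu'v hy c hc.le h2
      have t3 : lowerDarboux f u (x 1) + lowerDarboux f (x 1) c ≤ lowerDarboux f u c :=
        my_lower_superadd (my_bdd_mono hb (Set.Icc_subset_Icc le_rfl h2))
          huu'.le hc.le
      linarith [hsplit]

private lemma my_lower_subadd (hb : BoundedOn f (Set.Icc u v)) (h1 : u ≤ c) (h2 : c ≤ v) :
    lowerDarboux f u v ≤ lowerDarboux f u c + lowerDarboux f c v := by
  refine csSup_le (my_lowerSet_ne (h1.trans h2)) ?_
  rintro s ⟨n, x, hx, rfl⟩
  exact my_lowerSum_le_add n u x hb hx c h1 h2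

private lemma my_le_upperSum_add :
    ∀ (n : ℕ) (u : ℝ) (x : ℕ → ℝ), BoundedOn f (Set.Icc u v) → IsPartition u v n x →
      ∀ c, u ≤ c → c ≤ v → upperDarboux f u c + upperDarboux f c v ≤ upperSum f n x := by
  intro n
  induction n with
  | zero =>
    intro u x hb hx c h1 h2
    have huv : u = v := by rw [← hx.1, hx.2.1]
    have hcu : c = u := le_antisymm (huv ▸ h2) h1
    subst hcu
    subst huv
    simp [upperSum, my_upperDarboux_self]
  | succ n ih =>
    intro u x hb hx c h1 h2
    have hx0 : x 0 = u := hx.1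
    have huu' : u < x 1 := by rw [← hx0]; exact hx.2.2 0 (Nat.succ_pos n)
    have hu'v : x 1 ≤ v := (my_part_mem hx (show 1 ≤ n + 1 by omega)).2
    have hy := my_shift_part hx
    have hbuu' : BoundedOn f (Set.Icc u (x 1)) :=
      my_bdd_mono hb (Set.Icc_subset_Icc le_rfl hu'v)
    have hbu'v : BoundedOn f (Set.Icc (x 1) v) :=
      my_bdd_mono hb (Set.Icc_subset_Icc huu'.le le_rfl)
    have hsplit : upperSum f (n + 1) x
        = sSup (f '' Set.Icc u (x 1)) * (x 1 - u) + upperSum f n (fun i => x (i + 1)) := by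
      rw [my_upperSum_shift, hx0]
    rcases le_or_gt c (x 1) with hc | hc
    · have hbcu' : BoundedOn f (Set.Icc c (x 1)) :=
        my_bdd_mono hbuu' (Set.Icc_subset_Icc h1 le_rfl)
      have hbuc : BoundedOn f (Set.Icc u c) :=
        my_bdd_mono hbuu' (Set.Icc_subset_Icc le_rfl hc)
      have t1 : upperDarboux f u c + upperDarboux f c (x 1)
          ≤ sSup (f '' Set.Icc u (x 1)) * (x 1 - u) := by
        have m1 : sSup (f '' Set.Icc u c) ≤ sSup (f '' Set.Icc u (x 1)) :=
          my_sSup_mono hbuu' (Set.Icc_subset_Icc le_rfl hc) h1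
        have m2 : sSup (f '' Set.Icc c (x 1)) ≤ sSup (f '' Set.Icc u (x 1)) :=
          my_sSup_mono hbuu' (Set.Icc_subset_Icc h1 le_rfl) hc
        have b1 : upperDarboux f u c ≤ sSup (f '' Set.Icc u c) * (c - u) :=
          my_upperDarboux_le hbuc h1
        have b2 : upperDarboux f c (x 1) ≤ sSup (f '' Set.Icc c (x 1)) * (x 1 - c) :=
          my_upperDarboux_le hbcu' hc
        nlinarith [mul_le_mul_of_nonneg_right m1 (sub_nonneg.2 h1),
          mul_le_mul_of_nonneg_right m2 (sub_nonneg.2 hc)]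
      have t2 : upperDarboux f (x 1) v ≤ upperSum f n (fun i => x (i + 1)) :=
        csInf_le (my_upperSet_bddBelow hbu'v) ⟨n, _, hy, rfl⟩
      have t3 : upperDarboux f c v ≤ upperDarboux f c (x 1) + upperDarboux f (x 1) v :=
        my_upper_subadd (my_bdd_mono hb (Set.Icc_subset_Icc h1 le_rfl)) hc hu'v
      linarith [hsplit]
    · have t1 : upperDarboux f u (x 1) ≤ sSup (f '' Set.Icc u (x 1)) * (x 1 - u) :=
        my_upperDarboux_le hbuu' huu'.le
      have t2 : upperDarboux f (x 1) c + upperDarboux f c v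
          ≤ upperSum f n (fun i => x (i + 1)) :=
        ih (x 1) _ hbu'v hy c hc.le h2
      have t3 : upperDarboux f u c ≤ upperDarboux f u (x 1) + upperDarboux f (x 1) c :=
        my_upper_subadd (my_bdd_mono hb (Set.Icc_subset_Icc le_rfl h2))
          huu'.le hc.le
      linarith [hsplit]

private lemma my_upper_superadd (hb : BoundedOn f (Set.Icc u v)) (h1 : u ≤ c) (h2 : c ≤ v) :
    upperDarboux f u c + upperDarboux f c v ≤ upperDarboux f u v := by
  refine le_csInf (my_upperSet_ne (h1.trans h2)) ?_
  rintro s ⟨n, x, hx, rfl⟩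
  exact my_le_upperSum_add n u x hb hx c h1 h2

private lemma my_lowerDarboux_le_upperSum :
    ∀ (n : ℕ) (u : ℝ) (x : ℕ → ℝ), BoundedOn f (Set.Icc u v) → IsPartition u v n x →
      lowerDarboux f u v ≤ upperSum f n x := by
  intro n
  induction n with
  | zero =>
    intro u x hb hx
    have huv : u = v := by rw [← hx.1, hx.2.1]
    subst huv
    simp [upperSum, my_lowerDarboux_self]
  | succ n ih =>
    intro u x hb hx
    have hx0 : x 0 = u := hx.1
    have huu' : u < x 1 := by rw [← hx0]; exact hx.2.2 0 (Nat.succ_pos n)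
    have hu'v : x 1 ≤ v := (my_part_mem hx (show 1 ≤ n + 1 by omega)).2
    have hy := my_shift_part hx
    have hbuu' : BoundedOn f (Set.Icc u (x 1)) :=
      my_bdd_mono hb (Set.Icc_subset_Icc le_rfl hu'v)
    have hbu'v : BoundedOn f (Set.Icc (x 1) v) :=
      my_bdd_mono hb (Set.Icc_subset_Icc huu'.le le_rfl)
    have hsplit : upperSum f (n + 1) x
        = sSup (f '' Set.Icc u (x 1)) * (x 1 - u) + upperSum f n (fun i => x (i + 1)) := by
      rw [my_upperSum_shift, hx0]
    have t1 : lowerDarboux f u v ≤ lowerDarboux f u (x 1) + lowerDarboux f (x 1) v :=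
      my_lower_subadd hb huu'.le hu'v
    have t2 : lowerDarboux f u (x 1) ≤ sSup (f '' Set.Icc u (x 1)) * (x 1 - u) :=
      my_lowerDarboux_le hbuu' huu'.le
    have t3 : lowerDarboux f (x 1) v ≤ upperSum f n (fun i => x (i + 1)) :=
      ih (x 1) _ hbu'v hy
    linarith [hsplit]

private lemma my_L_le_U (hb : BoundedOn f (Set.Icc u v)) (h : u ≤ v) :
    lowerDarboux f u v ≤ upperDarboux f u v := by
  refine le_csInf (my_upperSet_ne h) ?_
  rintro s ⟨n, x, hx, rfl⟩
  exact my_lowerDarboux_le_upperSum n u x hb hx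

end Aux3
section Aux4

variable {f F : ℝ → ℝ} {a b : ℝ}

private lemma my_genPrim_step (hF : IsGenPrimitive a b f F) {x y : ℝ}
    (hx : x ∈ Set.Icc a b) (hy : y ∈ Set.Icc a b) (hxy : x ≤ y) :
    sInf (f '' Set.Icc x y) * (y - x) ≤ F y - F x ∧
      F y - F x ≤ sSup (f '' Set.Icc x y) * (y - x) := by
  rcases eq_or_lt_of_le hxy with rfl | h
  · simp
  · obtain ⟨h1, h2⟩ := hF x hx y hy h
    have hpos : (0 : ℝ) < y - x := sub_pos.2 h
    constructor
    · exact (le_div_iff₀ hpos).1 h1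
    · have := (div_le_iff₀ hpos).1 h2
      linarith

private lemma my_genPrim_sandwich (_hb : BoundedOn f (Set.Icc a b))
    (hF : IsGenPrimitive a b f F) {t : ℝ} (ht : t ∈ Set.Icc a b) :
    lowerDarboux f a t ≤ F t - F a ∧ F t - F a ≤ upperDarboux f a t := by
  obtain ⟨hat, htb⟩ := ht
  have hsub : Set.Icc a t ⊆ Set.Icc a b := Set.Icc_subset_Icc le_rfl htb
  constructor
  · refine csSup_le (my_lowerSet_ne hat) ?_
    rintro s ⟨n, x, hx, rfl⟩
    have key : lowerSum f n x ≤ ∑ i ∈ Finset.range n, (F (x (i + 1)) - F (x i)) := by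
      refine Finset.sum_le_sum ?_
      intro i hi
      have hi' : i < n := Finset.mem_range.1 hi
      exact (my_genPrim_step hF (hsub (my_part_mem hx hi'.le))
        (hsub (my_part_mem hx hi')) (hx.2.2 i hi').le).1
    rwa [Finset.sum_range_sub (fun i => F (x i)), hx.1, hx.2.1] at key
  · refine le_csInf (my_upperSet_ne hat) ?_
    rintro s ⟨n, x, hx, rfl⟩
    have key : ∑ i ∈ Finset.range n, (F (x (i + 1)) - F (x i)) ≤ upperSum f n x := by
      refine Finset.sum_le_sum ?_
      intro i hi
      have hi' : i < n := Finset.mem_range.1 hi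
      exact (my_genPrim_step hF (hsub (my_part_mem hx hi'.le))
        (hsub (my_part_mem hx hi')) (hx.2.2 i hi').le).2
    rwa [Finset.sum_range_sub (fun i => F (x i)), hx.1, hx.2.1] at key

private lemma my_isGenPrim_lower (hb : BoundedOn f (Set.Icc a b)) :
    IsGenPrimitive a b f (fun t => lowerDarboux f a t) := by
  intro x hx y hy hxy
  have hb1 : BoundedOn f (Set.Icc a y) := my_bdd_mono hb (Set.Icc_subset_Icc le_rfl hy.2)
  have hb2 : BoundedOn f (Set.Icc x y) := my_bdd_mono hb (Set.Icc_subset_Icc hx.1 hy.2)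
  have hsub : lowerDarboux f a y ≤ lowerDarboux f a x + lowerDarboux f x y :=
    my_lower_subadd hb1 hx.1 hxy.le
  have hsup : lowerDarboux f a x + lowerDarboux f x y ≤ lowerDarboux f a y :=
    my_lower_superadd hb1 hx.1 hxy.le
  have b1 : sInf (f '' Set.Icc x y) * (y - x) ≤ lowerDarboux f x y :=
    my_le_lowerDarboux hb2 hxy.le
  have b2 : lowerDarboux f x y ≤ sSup (f '' Set.Icc x y) * (y - x) :=
    my_lowerDarboux_le hb2 hxy.le
  have hpos : (0 : ℝ) < y - x := sub_pos.2 hxy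
  constructor
  · rw [le_div_iff₀ hpos]; simp only []; linarith
  · rw [div_le_iff₀ hpos]; simp only []; nlinarith [hsub, b2]

private lemma my_isGenPrim_upper (hb : BoundedOn f (Set.Icc a b)) :
    IsGenPrimitive a b f (fun t => upperDarboux f a t) := by
  intro x hx y hy hxy
  have hb1 : BoundedOn f (Set.Icc a y) := my_bdd_mono hb (Set.Icc_subset_Icc le_rfl hy.2)
  have hb2 : BoundedOn f (Set.Icc x y) := my_bdd_mono hb (Set.Icc_subset_Icc hx.1 hy.2)
  have hsub : upperDarboux f a y ≤ upperDarboux f a x + upperDarboux f x y :=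
    my_upper_subadd hb1 hx.1 hxy.le
  have hsup : upperDarboux f a x + upperDarboux f x y ≤ upperDarboux f a y :=
    my_upper_superadd hb1 hx.1 hxy.le
  have b1 : sInf (f '' Set.Icc x y) * (y - x) ≤ upperDarboux f x y :=
    my_le_upperDarboux hb2 hxy.le
  have b2 : upperDarboux f x y ≤ sSup (f '' Set.Icc x y) * (y - x) :=
    my_upperDarboux_le hb2 hxy.le
  have hpos : (0 : ℝ) < y - x := sub_pos.2 hxy
  constructor
  · rw [le_div_iff₀ hpos]; simp only []; linarith
  · rw [div_le_iff₀ hpos]; simp only []; nlinarith [hsub, b2]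

end Aux4

/-- A bounded function `f` on `[a, b]` is Riemann integrable if and only if any two of its
generalized primitives differ by a constant on `[a, b]`. -/
theorem riemannIntegrable_iff_genPrimitives_differ_by_const (a b : ℝ) (hab : a ≤ b)
    (f : ℝ → ℝ) (hf : BoundedOn f (Set.Icc a b)) :
    RiemannIntegrableOn f a b ↔
      ∀ F G : ℝ → ℝ, IsGenPrimitive a b f F → IsGenPrimitive a b f G →
        ∃ c : ℝ, ∀ x ∈ Set.Icc a b, F x = G x + c := by
  constructor
  · rintro ⟨-, hLU⟩ F G hF hG
    refine ⟨F a - G a, fun t ht => ?_⟩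
    have hbat : BoundedOn f (Set.Icc a t) := my_bdd_mono hf (Set.Icc_subset_Icc le_rfl ht.2)
    have hbtb : BoundedOn f (Set.Icc t b) := my_bdd_mono hf (Set.Icc_subset_Icc ht.1 le_rfl)
    have e1 : lowerDarboux f a b ≤ lowerDarboux f a t + lowerDarboux f t b :=
      my_lower_subadd hf ht.1 ht.2
    have e2 : upperDarboux f a t + upperDarboux f t b ≤ upperDarboux f a b :=
      my_upper_superadd hf ht.1 ht.2
    have l1 : lowerDarboux f a t ≤ upperDarboux f a t := my_L_le_U hbat ht.1
    have l2 : lowerDarboux f t b ≤ upperDarboux f t b := my_L_le_U hbtb ht.2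
    have hLUt : lowerDarboux f a t = upperDarboux f a t := by linarith
    have sF := my_genPrim_sandwich hf hF ht
    have sG := my_genPrim_sandwich hf hG ht
    have : F t - F a = G t - G a := by
      have f1 := sF.1
      have f2 := sF.2
      have g1 := sG.1
      have g2 := sG.2
      linarith
    linarith
  · intro h
    refine ⟨hf, ?_⟩
    obtain ⟨c, hc⟩ := h _ _ (my_isGenPrim_lower hf) (my_isGenPrim_upper hf)
    have ha := hc a (Set.left_mem_Icc.2 hab)
    have hb' := hc b (Set.right_mem_Icc.2 hab)
    simp only [my_lowerDarboux_self, my_upperDarboux_self] at ha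
    linarith
end
end

section
/- Let f : [a,b] → ℝ be Riemann integrable on [a,b]. Then F : [a,b] → ℝ is a generalized primitive of f if and only if for each x₀ ∈ [a,b] there exists c ∈ ℝ such that F(x) = c + ∫_{x₀}^x f(y) dy for all x ∈ [a,b]. -/
noncomputable section

section Aux

open Set Finset

variable {f : ℝ → ℝ} {u v w : ℝ} {n : ℕ} {x : ℕ → ℝ}

lemma part_le (h : IsPartition u v n x) {i j : ℕ} (hij : i ≤ j) (hj : j ≤ n) :
    x i ≤ x j := by
  induction j with
  | zero => cases Nat.le_zero.mp hij; exact le_rfl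
  | succ j ih =>
    rcases Nat.eq_or_lt_of_le hij with rfl | hij'
    · exact le_rfl
    · exact le_trans (ih (Nat.lt_succ_iff.mp hij') (le_trans (Nat.le_succ j) hj))
        (le_of_lt (h.2.2 j (lt_of_lt_of_le (Nat.lt_succ_self j) hj)))

lemma part_mem (h : IsPartition u v n x) {i : ℕ} (hi : i ≤ n) :
    x i ∈ Set.Icc u v :=
  ⟨h.1 ▸ part_le h (Nat.zero_le i) hi, h.2.1 ▸ part_le h hi le_rfl⟩

lemma part_uv (h : IsPartition u v n x) : u ≤ v := by
  have := part_le h (Nat.zero_le n) le_rfl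
  rw [h.1, h.2.1] at this; exact this

lemma boundedOn_mono {s t : Set ℝ} (hb : BoundedOn f t) (hst : s ⊆ t) : BoundedOn f s := by
  obtain ⟨M, hM⟩ := hb; exact ⟨M, fun y hy => hM y (hst hy)⟩

lemma im_ne (huv : u ≤ v) : (f '' Set.Icc u v).Nonempty :=
  ⟨f u, Set.mem_image_of_mem f (Set.left_mem_Icc.mpr huv)⟩

lemma im_bddAbove (hb : BoundedOn f (Set.Icc u v)) {s : Set ℝ} (hs : s ⊆ Set.Icc u v) :
    BddAbove (f '' s) := by
  obtain ⟨M, hM⟩ := hb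
  exact ⟨M, fun y ⟨t, ht, hty⟩ => hty ▸ (abs_le.mp (hM t (hs ht))).2⟩

lemma im_bddBelow (hb : BoundedOn f (Set.Icc u v)) {s : Set ℝ} (hs : s ⊆ Set.Icc u v) :
    BddBelow (f '' s) := by
  obtain ⟨M, hM⟩ := hb
  exact ⟨-M, fun y ⟨t, ht, hty⟩ => hty ▸ (abs_le.mp (hM t (hs ht))).1⟩

/-- On a subinterval the `sInf` is at least the `sInf` over the whole interval. -/
lemma sInf_mono' (hb : BoundedOn f (Set.Icc u v)) {s t : ℝ} (hst : s ≤ t)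
    (hsub : Set.Icc s t ⊆ Set.Icc u v) :
    sInf (f '' Set.Icc u v) ≤ sInf (f '' Set.Icc s t) :=
  csInf_le_csInf (im_bddBelow hb (subset_refl _)) (im_ne hst) (Set.image_mono hsub)

lemma sSup_mono' (hb : BoundedOn f (Set.Icc u v)) {s t : ℝ} (hst : s ≤ t)
    (hsub : Set.Icc s t ⊆ Set.Icc u v) :
    sSup (f '' Set.Icc s t) ≤ sSup (f '' Set.Icc u v) :=
  csSup_le_csSup (im_bddAbove hb (subset_refl _)) (im_ne hst) (Set.image_mono hsub)

lemma sInf_le_sSup' (hb : BoundedOn f (Set.Icc u v)) (huv : u ≤ v) :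
    sInf (f '' Set.Icc u v) ≤ sSup (f '' Set.Icc u v) :=
  csInf_le_csSup (hb := im_bddBelow hb (subset_refl _)) (ha := im_bddAbove hb (subset_refl _)) (im_ne huv)

end Aux

section Sums

open Set Finset

variable {f : ℝ → ℝ} {u v w : ℝ} {n : ℕ} {x : ℕ → ℝ}

lemma icc_sub (h : IsPartition u v n x) {i : ℕ} (hi : i < n) :
    Set.Icc (x i) (x (i + 1)) ⊆ Set.Icc u v :=
  Set.Icc_subset_Icc (part_mem h (le_of_lt hi)).1 (part_mem h hi).2

lemma lowerSum_le_upperSum (hb : BoundedOn f (Set.Icc u v)) (h : IsPartition u v n x) :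
    lowerSum f n x ≤ upperSum f n x := by
  apply Finset.sum_le_sum
  intro i hi
  rw [Finset.mem_range] at hi
  have hx : x i ≤ x (i + 1) := le_of_lt (h.2.2 i hi)
  have hsub := icc_sub h hi
  exact mul_le_mul_of_nonneg_right
    (csInf_le_csSup (hb := im_bddBelow hb hsub) (ha := im_bddAbove hb hsub) (im_ne hx))
    (by linarith)

lemma lowerSum_ge (hb : BoundedOn f (Set.Icc u v)) (h : IsPartition u v n x) :
    sInf (f '' Set.Icc u v) * (v - u) ≤ lowerSum f n x := by
  have key : ∀ i ∈ Finset.range n,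
      sInf (f '' Set.Icc u v) * (x (i+1) - x i)
        ≤ sInf (f '' Set.Icc (x i) (x (i+1))) * (x (i+1) - x i) := by
    intro i hi
    rw [Finset.mem_range] at hi
    exact mul_le_mul_of_nonneg_right
      (sInf_mono' hb (le_of_lt (h.2.2 i hi)) (icc_sub h hi))
      (by have := h.2.2 i hi; linarith)
  calc sInf (f '' Set.Icc u v) * (v - u)
      = ∑ i ∈ Finset.range n, sInf (f '' Set.Icc u v) * (x (i+1) - x i) := by
        rw [← Finset.mul_sum, Finset.sum_range_sub, h.1, h.2.1]
    _ ≤ lowerSum f n x := Finset.sum_le_sum key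

lemma upperSum_le (hb : BoundedOn f (Set.Icc u v)) (h : IsPartition u v n x) :
    upperSum f n x ≤ sSup (f '' Set.Icc u v) * (v - u) := by
  have key : ∀ i ∈ Finset.range n,
      sSup (f '' Set.Icc (x i) (x (i+1))) * (x (i+1) - x i)
        ≤ sSup (f '' Set.Icc u v) * (x (i+1) - x i) := by
    intro i hi
    rw [Finset.mem_range] at hi
    exact mul_le_mul_of_nonneg_right
      (sSup_mono' hb (le_of_lt (h.2.2 i hi)) (icc_sub h hi))
      (by have := h.2.2 i hi; linarith)
  calc upperSum f n x ≤ ∑ i ∈ Finset.range n, sSup (f '' Set.Icc u v) * (x (i+1) - x i) :=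
        Finset.sum_le_sum key
    _ = sSup (f '' Set.Icc u v) * (v - u) := by
        rw [← Finset.mul_sum, Finset.sum_range_sub, h.1, h.2.1]

lemma lowerSum_le (hb : BoundedOn f (Set.Icc u v)) (h : IsPartition u v n x) :
    lowerSum f n x ≤ sSup (f '' Set.Icc u v) * (v - u) :=
  le_trans (lowerSum_le_upperSum hb h) (upperSum_le hb h)

lemma upperSum_ge (hb : BoundedOn f (Set.Icc u v)) (h : IsPartition u v n x) :
    sInf (f '' Set.Icc u v) * (v - u) ≤ upperSum f n x :=
  le_trans (lowerSum_ge hb h) (lowerSum_le_upperSum hb h)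

/-- The trivial partition of `[u,v]`, `u < v`. -/
lemma trivPart (huv : u < v) : IsPartition u v 1 (fun i => if i = 0 then u else v) := by
  refine ⟨rfl, rfl, ?_⟩
  intro i hi
  interval_cases i
  simpa using huv

lemma trivPart_lowerSum (huv : u < v) :
    lowerSum f 1 (fun i => if i = 0 then u else v) = sInf (f '' Set.Icc u v) * (v - u) := by
  simp [lowerSum]

lemma trivPart_upperSum (huv : u < v) :
    upperSum f 1 (fun i => if i = 0 then u else v) = sSup (f '' Set.Icc u v) * (v - u) := by
  simp [upperSum]

lemma constPart : IsPartition u u 0 (fun _ => u) := ⟨rfl, rfl, by omega⟩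

lemma lowerSum_zero : lowerSum f 0 x = 0 := by simp [lowerSum]

lemma upperSum_zero : upperSum f 0 x = 0 := by simp [upperSum]

end Sums

section Darboux

open Set Finset

variable {f : ℝ → ℝ} {u v w : ℝ} {n : ℕ} {x : ℕ → ℝ}

/-- The set of lower sums. -/
def LSet (f : ℝ → ℝ) (u v : ℝ) : Set ℝ :=
  {s : ℝ | ∃ n x, IsPartition u v n x ∧ s = lowerSum f n x}

def USet (f : ℝ → ℝ) (u v : ℝ) : Set ℝ :=
  {s : ℝ | ∃ n x, IsPartition u v n x ∧ s = upperSum f n x}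

lemma lowerDarboux_eq : lowerDarboux f u v = sSup (LSet f u v) := rfl
lemma upperDarboux_eq : upperDarboux f u v = sInf (USet f u v) := rfl

lemma LSet_nonempty (huv : u ≤ v) : (LSet f u v).Nonempty := by
  rcases eq_or_lt_of_le huv with rfl | h
  · exact ⟨0, 0, fun _ => u, constPart, lowerSum_zero.symm⟩
  · exact ⟨_, 1, _, trivPart h, rfl⟩

lemma USet_nonempty (huv : u ≤ v) : (USet f u v).Nonempty := by
  rcases eq_or_lt_of_le huv with rfl | h
  · exact ⟨0, 0, fun _ => u, constPart, upperSum_zero.symm⟩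
  · exact ⟨_, 1, _, trivPart h, rfl⟩

lemma LSet_bddAbove (hb : BoundedOn f (Set.Icc u v)) : BddAbove (LSet f u v) := by
  refine ⟨sSup (f '' Set.Icc u v) * (v - u), ?_⟩
  rintro s ⟨n, x, hx, rfl⟩
  exact lowerSum_le hb hx

lemma USet_bddBelow (hb : BoundedOn f (Set.Icc u v)) : BddBelow (USet f u v) := by
  refine ⟨sInf (f '' Set.Icc u v) * (v - u), ?_⟩
  rintro s ⟨n, x, hx, rfl⟩
  exact upperSum_ge hb hx

lemma part_self (h : IsPartition u u n x) : n = 0 := by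
  by_contra hn
  have := part_uv ⟨rfl, (h.1.trans h.2.1.symm : x 0 = x n).symm, h.2.2⟩
  have h0 : x 0 < x n := by
    calc x 0 < x 1 := h.2.2 0 (Nat.pos_of_ne_zero hn)
      _ ≤ x n := part_le h (Nat.one_le_iff_ne_zero.mpr hn) le_rfl
  rw [h.1, h.2.1] at h0
  exact lt_irrefl u h0

lemma lowerDarboux_self : lowerDarboux f u u = 0 := by
  rw [lowerDarboux_eq]
  have : LSet f u u = {0} := by
    ext s
    constructor
    · rintro ⟨n, x, hx, rfl⟩
      have := part_self hx
      subst this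
      simp [lowerSum]
    · rintro rfl
      exact ⟨0, fun _ => u, constPart, lowerSum_zero.symm⟩
  rw [this, csSup_singleton]

lemma upperDarboux_self : upperDarboux f u u = 0 := by
  rw [upperDarboux_eq]
  have : USet f u u = {0} := by
    ext s
    constructor
    · rintro ⟨n, x, hx, rfl⟩
      have := part_self hx
      subst this
      simp [upperSum]
    · rintro rfl
      exact ⟨0, fun _ => u, constPart, upperSum_zero.symm⟩
  rw [this, csInf_singleton]

lemma lowerDarboux_ge (hb : BoundedOn f (Set.Icc u v)) (huv : u ≤ v) :
    sInf (f '' Set.Icc u v) * (v - u) ≤ lowerDarboux f u v := by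
  rcases eq_or_lt_of_le huv with rfl | h
  · simp [lowerDarboux_self]
  · rw [lowerDarboux_eq, ← trivPart_lowerSum (f := f) h]
    exact le_csSup (LSet_bddAbove hb) ⟨1, _, trivPart h, rfl⟩

lemma lowerDarboux_le (hb : BoundedOn f (Set.Icc u v)) (huv : u ≤ v) :
    lowerDarboux f u v ≤ sSup (f '' Set.Icc u v) * (v - u) := by
  rw [lowerDarboux_eq]
  apply csSup_le (LSet_nonempty huv)
  rintro s ⟨n, x, hx, rfl⟩
  exact lowerSum_le hb hx

lemma upperDarboux_le (hb : BoundedOn f (Set.Icc u v)) (huv : u ≤ v) :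
    upperDarboux f u v ≤ sSup (f '' Set.Icc u v) * (v - u) := by
  rcases eq_or_lt_of_le huv with rfl | h
  · simp [upperDarboux_self]
  · rw [upperDarboux_eq, ← trivPart_upperSum (f := f) h]
    exact csInf_le (USet_bddBelow hb) ⟨1, _, trivPart h, rfl⟩

lemma upperDarboux_ge (hb : BoundedOn f (Set.Icc u v)) (huv : u ≤ v) :
    sInf (f '' Set.Icc u v) * (v - u) ≤ upperDarboux f u v := by
  rw [upperDarboux_eq]
  apply le_csInf (USet_nonempty huv)
  rintro s ⟨n, x, hx, rfl⟩
  exact upperSum_ge hb hx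


section Concat

open Set Finset

variable {f : ℝ → ℝ} {u v w : ℝ} {n m : ℕ} {x y : ℕ → ℝ}

/-- Concatenation of two partitions. -/
def concatP (n : ℕ) (x y : ℕ → ℝ) : ℕ → ℝ := fun i => if i < n then x i else y (i - n)

lemma concatP_left (hx : IsPartition u v n x) (hy : IsPartition v w m y) {i : ℕ} (hi : i ≤ n) :
    concatP n x y i = x i := by
  rcases lt_or_eq_of_le hi with h | rfl
  · simp [concatP, h]
  · simp [concatP, hy.1, hx.2.1]

lemma concatP_right (n : ℕ) (x y : ℕ → ℝ) (j : ℕ) : concatP n x y (n + j) = y j := by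
  simp [concatP]

lemma concatP_isPartition (hx : IsPartition u v n x) (hy : IsPartition v w m y) :
    IsPartition u w (n + m) (concatP n x y) := by
  refine ⟨?_, ?_, ?_⟩
  · rw [concatP_left hx hy (Nat.zero_le n), hx.1]
  · rw [concatP_right, hy.2.1]
  · intro i hi
    rcases Nat.lt_or_ge i n with h | h
    · rcases Nat.lt_or_ge (i + 1) n with h1 | h1
      · rw [concatP_left hx hy (le_of_lt h), concatP_left hx hy (le_of_lt h1)]
        exact hx.2.2 i h
      · have : i + 1 = n := le_antisymm h h1
        rw [concatP_left hx hy (le_of_lt h), concatP_left hx hy (le_of_eq this)]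
        exact hx.2.2 i h
    · obtain ⟨j, rfl⟩ := Nat.exists_eq_add_of_le h
      have hj : j < m := by omega
      have e1 : concatP n x y (n + j) = y j := concatP_right n x y j
      have e2 : concatP n x y (n + j + 1) = y (j + 1) := by
        have : n + j + 1 = n + (j + 1) := by omega
        rw [this, concatP_right]
      rw [e1, e2]
      exact hy.2.2 j hj

lemma concatP_lowerSum (hx : IsPartition u v n x) (hy : IsPartition v w m y) :
    lowerSum f (n + m) (concatP n x y) = lowerSum f n x + lowerSum f m y := by
  unfold lowerSum
  rw [Finset.sum_range_add]
  congr 1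
  · apply Finset.sum_congr rfl
    intro i hi
    rw [Finset.mem_range] at hi
    rw [concatP_left hx hy (le_of_lt hi), concatP_left hx hy hi]
  · apply Finset.sum_congr rfl
    intro j hj
    have e2 : concatP n x y (n + j + 1) = y (j + 1) := by
      have : n + j + 1 = n + (j + 1) := by omega
      rw [this, concatP_right]
    rw [concatP_right, e2]

lemma concatP_upperSum (hx : IsPartition u v n x) (hy : IsPartition v w m y) :
    upperSum f (n + m) (concatP n x y) = upperSum f n x + upperSum f m y := by
  unfold upperSum
  rw [Finset.sum_range_add]
  congr 1
  · apply Finset.sum_congr rfl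
    intro i hi
    rw [Finset.mem_range] at hi
    rw [concatP_left hx hy (le_of_lt hi), concatP_left hx hy hi]
  · apply Finset.sum_congr rfl
    intro j hj
    have e2 : concatP n x y (n + j + 1) = y (j + 1) := by
      have : n + j + 1 = n + (j + 1) := by omega
      rw [this, concatP_right]
    rw [concatP_right, e2]

lemma lowerDarboux_superadd (hb : BoundedOn f (Set.Icc u w)) (huv : u ≤ v) (hvw : v ≤ w) :
    lowerDarboux f u v + lowerDarboux f v w ≤ lowerDarboux f u w := by
  have huw : u ≤ w := le_trans huv hvw
  have hbuv : BoundedOn f (Set.Icc u v) := boundedOn_mono hb (Set.Icc_subset_Icc le_rfl hvw)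
  have hbvw : BoundedOn f (Set.Icc v w) := boundedOn_mono hb (Set.Icc_subset_Icc huv le_rfl)
  have key : lowerDarboux f u v ≤ lowerDarboux f u w - lowerDarboux f v w := by
    rw [lowerDarboux_eq]
    apply csSup_le (LSet_nonempty huv)
    rintro s ⟨n, x, hx, rfl⟩
    have h2 : lowerDarboux f v w ≤ lowerDarboux f u w - lowerSum f n x := by
      rw [lowerDarboux_eq]
      apply csSup_le (LSet_nonempty hvw)
      rintro t ⟨m, y, hy, rfl⟩
      have hmem : lowerSum f n x + lowerSum f m y ∈ LSet f u w :=
        ⟨n + m, concatP n x y, concatP_isPartition hx hy, (concatP_lowerSum hx hy).symm⟩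
      have := le_csSup (LSet_bddAbove hb) hmem
      rw [← lowerDarboux_eq] at this
      linarith
    linarith
  linarith


lemma upperDarboux_subadd (hb : BoundedOn f (Set.Icc u w)) (huv : u ≤ v) (hvw : v ≤ w) :
    upperDarboux f u w ≤ upperDarboux f u v + upperDarboux f v w := by
  have huw : u ≤ w := le_trans huv hvw
  have key : upperDarboux f u w - upperDarboux f v w ≤ upperDarboux f u v := by
    rw [upperDarboux_eq]
    apply le_csInf (USet_nonempty huv)
    rintro s ⟨n, x, hx, rfl⟩
    have h2 : upperDarboux f u w - upperSum f n x ≤ upperDarboux f v w := by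
      rw [upperDarboux_eq]
      apply le_csInf (USet_nonempty hvw)
      rintro t ⟨m, y, hy, rfl⟩
      have hmem : upperSum f n x + upperSum f m y ∈ USet f u w :=
        ⟨n + m, concatP n x y, concatP_isPartition hx hy, (concatP_upperSum hx hy).symm⟩
      have := csInf_le (USet_bddBelow hb) hmem
      rw [← upperDarboux_eq] at this
      simp only [← upperDarboux_eq]
      linarith
    simp only [← upperDarboux_eq]
    linarith
  linarith


lemma sum_split (g : ℕ → ℝ) {i n : ℕ} (h : i ≤ n) :
    ∑ j ∈ Finset.range n, g j
      = ∑ j ∈ Finset.range i, g j + ∑ j ∈ Finset.range (n - i), g (i + j) := by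
  obtain ⟨m, rfl⟩ := Nat.exists_eq_add_of_le h
  rw [Nat.add_sub_cancel_left, Finset.sum_range_add]

/-- A partition of `[u,w]` can be split at any intermediate point `v`, not increasing
the lower sum and not decreasing the upper sum. -/
lemma exists_split (hb : BoundedOn f (Set.Icc u w)) (hx : IsPartition u w n x)
    (huv : u ≤ v) (hvw : v ≤ w) :
    ∃ n₁ y₁ n₂ y₂, IsPartition u v n₁ y₁ ∧ IsPartition v w n₂ y₂ ∧
      lowerSum f n x ≤ lowerSum f n₁ y₁ + lowerSum f n₂ y₂ ∧
      upperSum f n₁ y₁ + upperSum f n₂ y₂ ≤ upperSum f n x := by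
  rcases eq_or_lt_of_le huv with rfl | huv'
  · exact ⟨0, fun _ => u, n, x, constPart, hx, by simp [lowerSum_zero], by simp [upperSum_zero]⟩
  rcases eq_or_lt_of_le hvw with rfl | hvw'
  · exact ⟨n, x, 0, fun _ => v, hx, constPart, by simp [lowerSum_zero], by simp [upperSum_zero]⟩
  by_cases hex : ∃ i, i ≤ n ∧ x i = v
  · obtain ⟨i, hi, hxi⟩ := hex
    refine ⟨i, x, n - i, fun j => x (i + j), ?_, ?_, ?_, ?_⟩
    · exact ⟨hx.1, hxi, fun j hj => hx.2.2 j (lt_of_lt_of_le hj hi)⟩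
    · refine ⟨hxi, ?_, fun j hj => hx.2.2 (i + j) (by omega)⟩
      show x (i + (n - i)) = w
      have : i + (n - i) = n := by omega
      rw [this, hx.2.1]
    · exact le_of_eq (sum_split _ hi)
    · exact le_of_eq (sum_split (g := fun i =>
        sSup (f '' Set.Icc (x i) (x (i + 1))) * (x (i + 1) - x i)) hi).symm
  · push_neg at hex
    -- find k with x k < v < x (k+1)
    have hn : 1 ≤ n := by
      rcases Nat.eq_zero_or_pos n with rfl | h
      · exfalso; have := hx.1.symm.trans hx.2.1; linarith
      · exact h
    have hPex : ∃ i, v ≤ x (i + 1) := by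
      refine ⟨n - 1, ?_⟩
      have : n - 1 + 1 = n := by omega
      rw [this, hx.2.1]; exact le_of_lt hvw'
    classical
    set k := Nat.find hPex with hk_def
    have hk1 : v ≤ x (k + 1) := Nat.find_spec hPex
    have hkn : k < n := by
      have h1 : k ≤ n - 1 := Nat.find_min' hPex (by
        have : n - 1 + 1 = n := by omega
        rw [this, hx.2.1]; exact le_of_lt hvw')
      omega
    have hk0 : x k < v := by
      rcases Nat.eq_zero_or_pos k with hk | hk
      · rw [hk, hx.1]; exact huv'
      · have := Nat.find_min hPex (show k - 1 < k by omega)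
        have e : k - 1 + 1 = k := by omega
        rw [e] at this
        exact lt_of_not_ge this
    have hk1' : v < x (k + 1) := lt_of_le_of_ne hk1 (fun h => hex (k + 1) hkn h.symm)
    obtain ⟨m, hnm⟩ : ∃ m, n = k + 1 + m := ⟨n - k - 1, by omega⟩
    have hnk : n - k = m + 1 := by omega
    set y₁ : ℕ → ℝ := fun i => if i ≤ k then x i else v with hy1_def
    set y₂ : ℕ → ℝ := fun j => if j = 0 then v else x (k + j) with hy2_def
    have hP1 : IsPartition u v (k + 1) y₁ := by
      refine ⟨?_, ?_, ?_⟩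
      · simp only [hy1_def]; rw [if_pos (Nat.zero_le k), hx.1]
      · simp only [hy1_def]; rw [if_neg (by omega)]
      · intro i hi
        rcases Nat.lt_or_ge i k with h | h
        · simp only [hy1_def]
          rw [if_pos (le_of_lt h), if_pos (by omega)]
          exact hx.2.2 i (by omega)
        · have : i = k := by omega
          subst this
          simp only [hy1_def]
          rw [if_pos le_rfl, if_neg (by omega)]
          exact hk0
    have hP2 : IsPartition v w (n - k) y₂ := by
      refine ⟨?_, ?_, ?_⟩
      · simp [hy2_def]
      · simp only [hy2_def]
        rw [if_neg (by omega)]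
        have : k + (n - k) = n := by omega
        rw [this, hx.2.1]
      · intro j hj
        rcases Nat.eq_zero_or_pos j with rfl | h
        · simpa [hy2_def] using hk1'
        · simp only [hy2_def]
          rw [if_neg (by omega), if_neg (by omega)]
          have e : k + (j + 1) = k + j + 1 := by omega
          rw [e]
          exact hx.2.2 (k + j) (by omega)
    have hsub : Set.Icc (x k) (x (k + 1)) ⊆ Set.Icc u w := icc_sub hx hkn
    have hb' : BoundedOn f (Set.Icc (x k) (x (k + 1))) := boundedOn_mono hb hsub
    have hd1 : (0:ℝ) ≤ v - x k := by linarith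
    have hd2 : (0:ℝ) ≤ x (k + 1) - v := by linarith
    refine ⟨k + 1, y₁, n - k, y₂, hP1, hP2, ?_, ?_⟩
    · have hsum : lowerSum f n x
          = (∑ i ∈ Finset.range k, sInf (f '' Set.Icc (x i) (x (i + 1))) * (x (i + 1) - x i))
            + sInf (f '' Set.Icc (x k) (x (k + 1))) * (x (k + 1) - x k)
            + ∑ j ∈ Finset.range m,
                sInf (f '' Set.Icc (x (k + 1 + j)) (x (k + 1 + j + 1)))
                  * (x (k + 1 + j + 1) - x (k + 1 + j)) := by
        unfold lowerSum
        rw [hnm, Finset.sum_range_add, Finset.sum_range_succ]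
      have h1 : lowerSum f (k + 1) y₁
          = (∑ i ∈ Finset.range k, sInf (f '' Set.Icc (x i) (x (i + 1))) * (x (i + 1) - x i))
            + sInf (f '' Set.Icc (x k) v) * (v - x k) := by
        unfold lowerSum
        rw [Finset.sum_range_succ]
        congr 1
        · apply Finset.sum_congr rfl
          intro i hi
          rw [Finset.mem_range] at hi
          have e1 : y₁ i = x i := if_pos (le_of_lt hi)
          have e2 : y₁ (i + 1) = x (i + 1) := if_pos (by omega)
          rw [e1, e2]
        · have e1 : y₁ k = x k := if_pos le_rfl
          have e2 : y₁ (k + 1) = v := if_neg (by omega)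
          rw [e1, e2]
      have h2 : lowerSum f (n - k) y₂
          = sInf (f '' Set.Icc v (x (k + 1))) * (x (k + 1) - v)
            + ∑ j ∈ Finset.range m,
                sInf (f '' Set.Icc (x (k + 1 + j)) (x (k + 1 + j + 1)))
                  * (x (k + 1 + j + 1) - x (k + 1 + j)) := by
        unfold lowerSum
        rw [hnk, show m + 1 = 1 + m from by omega, Finset.sum_range_add,
          Finset.sum_range_one]
        congr 1
        apply Finset.sum_congr rfl
        intro j hj
        have e1 : y₂ (1 + j) = x (k + (1 + j)) := if_neg (by omega)
        have e2 : y₂ (1 + j + 1) = x (k + (1 + j + 1)) := if_neg (by omega)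
        rw [e1, e2, show k + (1 + j) = k + 1 + j from by omega,
          show k + (1 + j + 1) = k + 1 + j + 1 from by omega]
      have m1 : sInf (f '' Set.Icc (x k) (x (k + 1))) ≤ sInf (f '' Set.Icc (x k) v) :=
        sInf_mono' hb' (le_of_lt hk0) (Set.Icc_subset_Icc le_rfl hk1)
      have m2 : sInf (f '' Set.Icc (x k) (x (k + 1))) ≤ sInf (f '' Set.Icc v (x (k + 1))) :=
        sInf_mono' hb' (le_of_lt hk1') (Set.Icc_subset_Icc (le_of_lt hk0) le_rfl)
      have t1 := mul_le_mul_of_nonneg_right m1 hd1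
      have t2 := mul_le_mul_of_nonneg_right m2 hd2
      rw [hsum, h1, h2]
      nlinarith [t1, t2]
    · have hsum : upperSum f n x
          = (∑ i ∈ Finset.range k, sSup (f '' Set.Icc (x i) (x (i + 1))) * (x (i + 1) - x i))
            + sSup (f '' Set.Icc (x k) (x (k + 1))) * (x (k + 1) - x k)
            + ∑ j ∈ Finset.range m,
                sSup (f '' Set.Icc (x (k + 1 + j)) (x (k + 1 + j + 1)))
                  * (x (k + 1 + j + 1) - x (k + 1 + j)) := by
        unfold upperSum
        rw [hnm, Finset.sum_range_add, Finset.sum_range_succ]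
      have h1 : upperSum f (k + 1) y₁
          = (∑ i ∈ Finset.range k, sSup (f '' Set.Icc (x i) (x (i + 1))) * (x (i + 1) - x i))
            + sSup (f '' Set.Icc (x k) v) * (v - x k) := by
        unfold upperSum
        rw [Finset.sum_range_succ]
        congr 1
        · apply Finset.sum_congr rfl
          intro i hi
          rw [Finset.mem_range] at hi
          have e1 : y₁ i = x i := if_pos (le_of_lt hi)
          have e2 : y₁ (i + 1) = x (i + 1) := if_pos (by omega)
          rw [e1, e2]
        · have e1 : y₁ k = x k := if_pos le_rfl
          have e2 : y₁ (k + 1) = v := if_neg (by omega)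
          rw [e1, e2]
      have h2 : upperSum f (n - k) y₂
          = sSup (f '' Set.Icc v (x (k + 1))) * (x (k + 1) - v)
            + ∑ j ∈ Finset.range m,
                sSup (f '' Set.Icc (x (k + 1 + j)) (x (k + 1 + j + 1)))
                  * (x (k + 1 + j + 1) - x (k + 1 + j)) := by
        unfold upperSum
        rw [hnk, show m + 1 = 1 + m from by omega, Finset.sum_range_add,
          Finset.sum_range_one]
        congr 1
        apply Finset.sum_congr rfl
        intro j hj
        have e1 : y₂ (1 + j) = x (k + (1 + j)) := if_neg (by omega)
        have e2 : y₂ (1 + j + 1) = x (k + (1 + j + 1)) := if_neg (by omega)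
        rw [e1, e2, show k + (1 + j) = k + 1 + j from by omega,
          show k + (1 + j + 1) = k + 1 + j + 1 from by omega]
      have m1 : sSup (f '' Set.Icc (x k) v) ≤ sSup (f '' Set.Icc (x k) (x (k + 1))) :=
        sSup_mono' hb' (le_of_lt hk0) (Set.Icc_subset_Icc le_rfl hk1)
      have m2 : sSup (f '' Set.Icc v (x (k + 1))) ≤ sSup (f '' Set.Icc (x k) (x (k + 1))) :=
        sSup_mono' hb' (le_of_lt hk1') (Set.Icc_subset_Icc (le_of_lt hk0) le_rfl)
      have t1 := mul_le_mul_of_nonneg_right m1 hd1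
      have t2 := mul_le_mul_of_nonneg_right m2 hd2
      rw [hsum, h1, h2]
      nlinarith [t1, t2]

end Concat

lemma lowerDarboux_subadd (hb : BoundedOn f (Set.Icc u w)) (huv : u ≤ v) (hvw : v ≤ w) :
    lowerDarboux f u w ≤ lowerDarboux f u v + lowerDarboux f v w := by
  have huw : u ≤ w := le_trans huv hvw
  have hbuv : BoundedOn f (Set.Icc u v) := boundedOn_mono hb (Set.Icc_subset_Icc le_rfl hvw)
  have hbvw : BoundedOn f (Set.Icc v w) := boundedOn_mono hb (Set.Icc_subset_Icc huv le_rfl)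
  rw [lowerDarboux_eq]
  apply csSup_le (LSet_nonempty huw)
  rintro s ⟨n, x, hx, rfl⟩
  obtain ⟨n₁, y₁, n₂, y₂, h1, h2, hle, _⟩ := exists_split hb hx huv hvw
  have e1 : lowerSum f n₁ y₁ ≤ lowerDarboux f u v :=
    le_csSup (LSet_bddAbove hbuv) ⟨n₁, y₁, h1, rfl⟩
  have e2 : lowerSum f n₂ y₂ ≤ lowerDarboux f v w :=
    le_csSup (LSet_bddAbove hbvw) ⟨n₂, y₂, h2, rfl⟩
  linarith

lemma upperDarboux_superadd (hb : BoundedOn f (Set.Icc u w)) (huv : u ≤ v) (hvw : v ≤ w) :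
    upperDarboux f u v + upperDarboux f v w ≤ upperDarboux f u w := by
  have huw : u ≤ w := le_trans huv hvw
  have hbuv : BoundedOn f (Set.Icc u v) := boundedOn_mono hb (Set.Icc_subset_Icc le_rfl hvw)
  have hbvw : BoundedOn f (Set.Icc v w) := boundedOn_mono hb (Set.Icc_subset_Icc huv le_rfl)
  rw [upperDarboux_eq (f := f) (u := u) (v := w)]
  apply le_csInf (USet_nonempty huw)
  rintro s ⟨n, x, hx, rfl⟩
  obtain ⟨n₁, y₁, n₂, y₂, h1, h2, _, hge⟩ := exists_split hb hx huv hvw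
  have e1 : upperDarboux f u v ≤ upperSum f n₁ y₁ :=
    csInf_le (USet_bddBelow hbuv) ⟨n₁, y₁, h1, rfl⟩
  have e2 : upperDarboux f v w ≤ upperSum f n₂ y₂ :=
    csInf_le (USet_bddBelow hbvw) ⟨n₂, y₂, h2, rfl⟩
  linarith

lemma lowerDarboux_add (hb : BoundedOn f (Set.Icc u w)) (huv : u ≤ v) (hvw : v ≤ w) :
    lowerDarboux f u w = lowerDarboux f u v + lowerDarboux f v w :=
  le_antisymm (lowerDarboux_subadd hb huv hvw) (lowerDarboux_superadd hb huv hvw)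

lemma upperDarboux_add (hb : BoundedOn f (Set.Icc u w)) (huv : u ≤ v) (hvw : v ≤ w) :
    upperDarboux f u w = upperDarboux f u v + upperDarboux f v w :=
  le_antisymm (upperDarboux_subadd hb huv hvw) (upperDarboux_superadd hb huv hvw)

lemma lowerSum_le_upperDarboux (hb : BoundedOn f (Set.Icc u v)) (hx : IsPartition u v n x) :
    lowerSum f n x ≤ upperDarboux f u v := by
  induction n generalizing v with
  | zero =>
    have : u = v := hx.1.symm.trans hx.2.1
    subst this
    rw [lowerSum_zero, upperDarboux_self]
  | succ n ih =>
    have hx' : IsPartition u (x n) n x :=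
      ⟨hx.1, rfl, fun i hi => hx.2.2 i (by omega)⟩
    have hun : u ≤ x n := part_uv hx'
    have hnv : x n ≤ v := by
      have := hx.2.2 n (Nat.lt_succ_self n)
      rw [hx.2.1] at this; exact le_of_lt this
    have hb' : BoundedOn f (Set.Icc u (x n)) :=
      boundedOn_mono hb (Set.Icc_subset_Icc le_rfl hnv)
    have hb'' : BoundedOn f (Set.Icc (x n) v) :=
      boundedOn_mono hb (Set.Icc_subset_Icc hun le_rfl)
    have step : sInf (f '' Set.Icc (x n) (x (n + 1))) * (x (n + 1) - x n)
        ≤ upperDarboux f (x n) v := by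
      rw [hx.2.1]
      exact upperDarboux_ge hb'' hnv
    have : lowerSum f (n + 1) x
        = lowerSum f n x + sInf (f '' Set.Icc (x n) (x (n + 1))) * (x (n + 1) - x n) := by
      unfold lowerSum
      rw [Finset.sum_range_succ]
    rw [this]
    calc lowerSum f n x + sInf (f '' Set.Icc (x n) (x (n + 1))) * (x (n + 1) - x n)
        ≤ upperDarboux f u (x n) + upperDarboux f (x n) v := by
          have := ih hb' hx'
          linarith
      _ ≤ upperDarboux f u v := upperDarboux_superadd hb hun hnv

lemma lowerDarboux_le_upperDarboux (hb : BoundedOn f (Set.Icc u v)) (huv : u ≤ v) :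
    lowerDarboux f u v ≤ upperDarboux f u v := by
  rw [lowerDarboux_eq]
  apply csSup_le (LSet_nonempty huv)
  rintro s ⟨n, x, hx, rfl⟩
  exact lowerSum_le_upperDarboux hb hx

/-- Integrability passes to subintervals. -/
lemma sub_integrable {a b : ℝ} (hb : BoundedOn f (Set.Icc a b))
    (heq : lowerDarboux f a b = upperDarboux f a b)
    (hau : a ≤ u) (huv : u ≤ v) (hvb : v ≤ b) :
    lowerDarboux f u v = upperDarboux f u v := by
  have hub : u ≤ b := le_trans huv hvb
  have hbau : BoundedOn f (Set.Icc a u) := boundedOn_mono hb (Set.Icc_subset_Icc le_rfl hub)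
  have hbub : BoundedOn f (Set.Icc u b) := boundedOn_mono hb (Set.Icc_subset_Icc hau le_rfl)
  have hbuv : BoundedOn f (Set.Icc u v) :=
    boundedOn_mono hb (Set.Icc_subset_Icc hau hvb)
  have hbvb : BoundedOn f (Set.Icc v b) :=
    boundedOn_mono hb (Set.Icc_subset_Icc (le_trans hau huv) le_rfl)
  have l1 : lowerDarboux f a b = lowerDarboux f a u + lowerDarboux f u b :=
    lowerDarboux_add hb hau hub
  have l2 : lowerDarboux f u b = lowerDarboux f u v + lowerDarboux f v b :=
    lowerDarboux_add hbub huv hvb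
  have u1 : upperDarboux f a b = upperDarboux f a u + upperDarboux f u b :=
    upperDarboux_add hb hau hub
  have u2 : upperDarboux f u b = upperDarboux f u v + upperDarboux f v b :=
    upperDarboux_add hbub huv hvb
  have c1 : lowerDarboux f a u ≤ upperDarboux f a u := lowerDarboux_le_upperDarboux hbau hau
  have c2 : lowerDarboux f u v ≤ upperDarboux f u v := lowerDarboux_le_upperDarboux hbuv huv
  have c3 : lowerDarboux f v b ≤ upperDarboux f v b := lowerDarboux_le_upperDarboux hbvb hvb
  linarith


end Darboux




section Main

open Set Finset

variable {f F : ℝ → ℝ} {u v : ℝ} {n : ℕ} {x : ℕ → ℝ}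

lemma genPrim_sums {a b : ℝ} (hF : IsGenPrimitive a b f F)
    (hsub : Set.Icc u v ⊆ Set.Icc a b) (hx : IsPartition u v n x) :
    lowerSum f n x ≤ F v - F u ∧ F v - F u ≤ upperSum f n x := by
  have htel : F v - F u = ∑ i ∈ Finset.range n, (F (x (i + 1)) - F (x i)) := by
    rw [Finset.sum_range_sub (fun i => F (x i)), hx.1, hx.2.1]
  have key : ∀ i ∈ Finset.range n,
      sInf (f '' Set.Icc (x i) (x (i + 1))) * (x (i + 1) - x i) ≤ F (x (i + 1)) - F (x i)
      ∧ F (x (i + 1)) - F (x i) ≤ sSup (f '' Set.Icc (x i) (x (i + 1))) * (x (i + 1) - x i) := by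
    intro i hi
    rw [Finset.mem_range] at hi
    have hlt := hx.2.2 i hi
    have h1 : x i ∈ Set.Icc a b := hsub (part_mem hx (le_of_lt hi))
    have h2 : x (i + 1) ∈ Set.Icc a b := hsub (part_mem hx hi)
    obtain ⟨hl, hr⟩ := hF (x i) h1 (x (i + 1)) h2 hlt
    have hpos : (0:ℝ) < x (i + 1) - x i := by linarith
    have hne : x (i + 1) - x i ≠ 0 := ne_of_gt hpos
    constructor
    · have := mul_le_mul_of_nonneg_right hl (le_of_lt hpos)
      rwa [div_mul_cancel₀ _ hne] at this
    · have := mul_le_mul_of_nonneg_right hr (le_of_lt hpos)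
      rwa [div_mul_cancel₀ _ hne] at this
  exact ⟨htel ▸ Finset.sum_le_sum (fun i hi => (key i hi).1),
    htel ▸ Finset.sum_le_sum (fun i hi => (key i hi).2)⟩

lemma genPrim_eval {a b : ℝ} (hb : BoundedOn f (Set.Icc a b))
    (heq : lowerDarboux f a b = upperDarboux f a b) (hF : IsGenPrimitive a b f F)
    (hau : a ≤ u) (huv : u ≤ v) (hvb : v ≤ b) :
    F v - F u = lowerDarboux f u v := by
  rcases eq_or_lt_of_le huv with rfl | h
  · simp [lowerDarboux_self]
  have hbuv : BoundedOn f (Set.Icc u v) := boundedOn_mono hb (Set.Icc_subset_Icc hau hvb)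
  have hsub : Set.Icc u v ⊆ Set.Icc a b := Set.Icc_subset_Icc hau hvb
  have h1 : lowerDarboux f u v ≤ F v - F u := by
    rw [lowerDarboux_eq]
    apply csSup_le (LSet_nonempty huv)
    rintro s ⟨n, x, hx, rfl⟩
    exact (genPrim_sums hF hsub hx).1
  have h2 : F v - F u ≤ upperDarboux f u v := by
    rw [upperDarboux_eq]
    apply le_csInf (USet_nonempty huv)
    rintro s ⟨n, x, hx, rfl⟩
    exact (genPrim_sums hF hsub hx).2
  have := sub_integrable hb heq hau huv hvb
  linarith

end Main

/-- If `f` is Riemann integrable on `[a, b]`, then `F` is a generalized primitive of `f`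
if and only if for each `x₀ ∈ [a, b]` there is a constant `c` with
`F x = c + ∫_{x₀}^x f` for all `x ∈ [a, b]`. -/
theorem genPrimitive_iff_indefinite_integral (a b : ℝ) (hab : a ≤ b) (f F : ℝ → ℝ)
    (hf : RiemannIntegrableOn f a b) :
    IsGenPrimitive a b f F ↔
      ∀ x₀ ∈ Set.Icc a b, ∃ c : ℝ, ∀ x ∈ Set.Icc a b,
        F x = c + riemannIntegral f x₀ x := by
  obtain ⟨hb, heq⟩ := hf
  constructor
  · intro hF x₀ hx₀
    refine ⟨F x₀, fun x hx => ?_⟩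
    rcases le_or_gt x₀ x with h | h
    · rw [riemannIntegral, if_pos h]
      have := genPrim_eval hb heq hF hx₀.1 h hx.2
      linarith
    · rw [riemannIntegral, if_neg (not_le.mpr h)]
      have := genPrim_eval hb heq hF hx.1 (le_of_lt h) hx₀.2
      linarith
  · intro h p hp q hq hpq
    obtain ⟨c, hc⟩ := h p hp
    have hFq := hc q hq
    have hFp := hc p hp
    rw [riemannIntegral, if_pos le_rfl, lowerDarboux_self] at hFp
    rw [riemannIntegral, if_pos (le_of_lt hpq)] at hFq
    have hFd : F q - F p = lowerDarboux f p q := by rw [hFq, hFp]; ring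
    have hbpq : BoundedOn f (Set.Icc p q) := boundedOn_mono hb (Set.Icc_subset_Icc hp.1 hq.2)
    have hge := lowerDarboux_ge hbpq (le_of_lt hpq)
    have hle := lowerDarboux_le hbpq (le_of_lt hpq)
    have hpos : (0:ℝ) < q - p := by linarith
    rw [hFd]
    constructor
    · rw [le_div_iff₀ hpos]; exact hge
    · rw [div_le_iff₀ hpos]; exact hle
end
end

section
/- Let f : [a,b] → ℝ be Riemann integrable on [a,b] and let F be a generalized primitive of f. Then F'(x) = f(x) for almost every x ∈ [a,b] (with respect to Lebesgue measure). -/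
noncomputable section

open MeasureTheory

noncomputable def cellLen (c d u v : ℝ) : ℝ := max 0 (min d v - max c u)

lemma cellLen_nonneg (c d u v : ℝ) : 0 ≤ cellLen c d u v := le_max_left _ _

lemma cellLen_eq (c d u v : ℝ) (hcd : c ≤ d) (huv : u ≤ v) :
    cellLen c d u v = max c (min d v) - max c (min d u) := by
  unfold cellLen
  rcases le_total d v with h1 | h1 <;> rcases le_total d u with h2 | h2 <;>
    rcases le_total c v with h3 | h3 <;> rcases le_total c u with h4 | h4 <;>
    simp [max_def, min_def, *] <;>
    first
    | (split_ifs <;> linarith)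
    | linarith

lemma partition_mono {n : ℕ} {x : ℕ → ℝ} (hx : ∀ i < n, x i < x (i+1)) :
    ∀ j ≤ n, ∀ i ≤ j, x i ≤ x j := by
  intro j hj
  induction j with
  | zero => intro i hi; interval_cases i; rfl
  | succ k ih =>
    intro i hi
    rcases Nat.eq_or_lt_of_le hi with rfl | h
    · rfl
    · exact le_trans (ih (by omega) i (by omega)) (le_of_lt (hx k (by omega)))

lemma sum_cellLen {n : ℕ} {x : ℕ → ℝ} (hx : ∀ i < n, x i < x (i+1))
    (c d : ℝ) (hcd : c ≤ d) (h0 : x 0 ≤ c) (hn : d ≤ x n) :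
    ∑ j ∈ Finset.range n, cellLen c d (x j) (x (j+1)) = d - c := by
  have : ∀ j ∈ Finset.range n, cellLen c d (x j) (x (j+1)) =
      (fun j => max c (min d (x j))) (j+1) - (fun j => max c (min d (x j))) j := by
    intro j hj
    simp only [Finset.mem_range] at hj
    exact cellLen_eq _ _ _ _ hcd (le_of_lt (hx j hj))
  rw [Finset.sum_congr rfl this]
  have h2 := Finset.sum_range_sub (fun j => c ⊔ d ⊓ x j) n
  beta_reduce at h2 ⊢
  rw [h2]
  rw [min_eq_left hn, max_eq_right hcd, min_eq_right (h0.trans hcd), max_eq_left h0]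

lemma cellLen_comm (c d u v : ℝ) : cellLen c d u v = cellLen u v c d := by
  simp only [cellLen, min_comm d v, max_comm c u]

lemma cellLen_pos_mem {c d u v : ℝ} (h : 0 < cellLen c d u v) :
    (max c u) ∈ Set.Icc c d ∧ (max c u) ∈ Set.Icc u v := by
  unfold cellLen at h
  rcases lt_max_iff.mp h with h' | h'
  · exact absurd h' (lt_irrefl _)
  · constructor <;> constructor
    · exact le_max_left _ _
    · have := le_min_iff.mp (le_of_lt (by linarith : max c u < min d v))
      exact this.1
    · exact le_max_right _ _
    · have := le_min_iff.mp (le_of_lt (by linarith : max c u < min d v))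
      exact this.2

lemma exists_subinterval {n : ℕ} {x : ℕ → ℝ} (hx : ∀ i < n, x i < x (i+1))
    {t : ℝ} (h0 : x 0 ≤ t) (hn : t ≤ x n) (hn0 : 0 < n) :
    ∃ i < n, x i ≤ t ∧ t ≤ x (i+1) := by
  induction n with
  | zero => omega
  | succ k ih =>
    rcases le_or_gt (x k) t with h | h
    · exact ⟨k, Nat.lt_succ_self k, h, hn⟩
    · rcases Nat.eq_zero_or_pos k with rfl | hk
      · exact absurd h0 (not_le.mpr h)
      · exact (ih (fun i hi => hx i (by omega)) (le_of_lt h) hk).imp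
          (fun i ⟨hi, h1, h2⟩ => ⟨by omega, h1, h2⟩)

lemma img_ne {f : ℝ → ℝ} {u v : ℝ} (huv : u ≤ v) : (f '' Set.Icc u v).Nonempty :=
  (Set.nonempty_Icc.mpr huv).image f

lemma img_bdd {a b M : ℝ} {f : ℝ → ℝ} (hM : ∀ t ∈ Set.Icc a b, |f t| ≤ M) {u v : ℝ} (hsub : Set.Icc u v ⊆ Set.Icc a b) :
    BddBelow (f '' Set.Icc u v) ∧ BddAbove (f '' Set.Icc u v) := by
  constructor
  · exact ⟨-M, fun s ⟨z, hz, hzs⟩ => hzs ▸ (neg_le_of_abs_le (hM z (hsub hz)))⟩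
  · exact ⟨M, fun s ⟨z, hz, hzs⟩ => hzs ▸ (le_of_abs_le (hM z (hsub hz)))⟩

lemma sInf_le_f {a b M : ℝ} {f : ℝ → ℝ} (hM : ∀ t ∈ Set.Icc a b, |f t| ≤ M) {u v z : ℝ} (hsub : Set.Icc u v ⊆ Set.Icc a b) (hz : z ∈ Set.Icc u v) :
    sInf (f '' Set.Icc u v) ≤ f z :=
  csInf_le (img_bdd hM hsub).1 ⟨z, hz, rfl⟩

lemma f_le_sSup {a b M : ℝ} {f : ℝ → ℝ} (hM : ∀ t ∈ Set.Icc a b, |f t| ≤ M) {u v z : ℝ} (hsub : Set.Icc u v ⊆ Set.Icc a b) (hz : z ∈ Set.Icc u v) :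
    f z ≤ sSup (f '' Set.Icc u v) :=
  le_csSup (img_bdd hM hsub).2 ⟨z, hz, rfl⟩

lemma cross_sum {a b : ℝ} {f : ℝ → ℝ} {n m : ℕ} {x y : ℕ → ℝ}
    (hP : IsPartition a b n x) (hQ : IsPartition a b m y) :
    upperSum f m y - lowerSum f n x =
      ∑ i ∈ Finset.range n, ∑ j ∈ Finset.range m,
        (sSup (f '' Set.Icc (y j) (y (j+1))) - sInf (f '' Set.Icc (x i) (x (i+1)))) *
          cellLen (x i) (x (i+1)) (y j) (y (j+1)) := by
  obtain ⟨hx0, hxn, hx⟩ := hP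
  obtain ⟨hy0, hym, hy⟩ := hQ
  have hU : upperSum f m y = ∑ j ∈ Finset.range m, ∑ i ∈ Finset.range n,
      sSup (f '' Set.Icc (y j) (y (j+1))) * cellLen (x i) (x (i+1)) (y j) (y (j+1)) := by
    unfold upperSum
    refine Finset.sum_congr rfl fun j hj => ?_
    simp only [Finset.mem_range] at hj
    rw [← Finset.mul_sum]
    congr 1
    rw [← sum_cellLen hx (y j) (y (j+1)) (le_of_lt (hy j hj))
        (by rw [hx0, ← hy0]; exact partition_mono hy j (by omega) 0 (by omega))
        (by rw [hxn, ← hym]; exact partition_mono hy m le_rfl (j+1) (by omega))]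
    exact Finset.sum_congr rfl fun i _ => by rw [cellLen_comm]
  have hL : lowerSum f n x = ∑ i ∈ Finset.range n, ∑ j ∈ Finset.range m,
      sInf (f '' Set.Icc (x i) (x (i+1))) * cellLen (x i) (x (i+1)) (y j) (y (j+1)) := by
    unfold lowerSum
    refine Finset.sum_congr rfl fun i hi => ?_
    simp only [Finset.mem_range] at hi
    rw [← Finset.mul_sum]
    congr 1
    rw [← sum_cellLen hy (x i) (x (i+1)) (le_of_lt (hx i hi))
        (by rw [hy0, ← hx0]; exact partition_mono hx i (by omega) 0 (by omega))
        (by rw [hym, ← hxn]; exact partition_mono hx n le_rfl (i+1) (by omega))]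
  rw [hU, hL, Finset.sum_comm, ← Finset.sum_sub_distrib]
  refine Finset.sum_congr rfl fun i _ => ?_
  rw [← Finset.sum_sub_distrib]
  exact Finset.sum_congr rfl fun j _ => (sub_mul _ _ _).symm

lemma null_bad {a b : ℝ} (hab : a < b) {f : ℝ → ℝ} (hf : RiemannIntegrableOn f a b)
    {ε : ℝ} (hε : 0 < ε) :
    volume {t | t ∈ Set.Icc a b ∧ ∀ δ > 0, ∃ s ∈ Set.Icc a b,
      |s - t| < δ ∧ ε < |f s - f t|} = 0 := by
  obtain ⟨⟨M, hM⟩, hEq⟩ := hf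
  set B := {t | t ∈ Set.Icc a b ∧ ∀ δ > 0, ∃ s ∈ Set.Icc a b,
      |s - t| < δ ∧ ε < |f s - f t|} with hB
  -- suffices to bound by every positive real
  have key : ∀ η : ℝ, 0 < η → volume B ≤ ENNReal.ofReal η := by
    intro η hη
    -- pick partitions
    have hSLne : {s : ℝ | ∃ n x, IsPartition a b n x ∧ s = lowerSum f n x}.Nonempty := by
      refine ⟨lowerSum f 1 (fun i => if i = 0 then a else b), 1, _, ⟨?_, ?_, ?_⟩, rfl⟩
      · simp
      · simp
      · intro i hi; interval_cases i; simpa using hab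
    have hSUne : {s : ℝ | ∃ n x, IsPartition a b n x ∧ s = upperSum f n x}.Nonempty := by
      refine ⟨upperSum f 1 (fun i => if i = 0 then a else b), 1, _, ⟨?_, ?_, ?_⟩, rfl⟩
      · simp
      · simp
      · intro i hi; interval_cases i; simpa using hab
    set V := lowerDarboux f a b with hV
    obtain ⟨L, ⟨n, x, hP, rfl⟩, hL⟩ :=
      exists_lt_of_lt_csSup hSLne (by linarith [mul_pos hε hη] :
        V - ε * η / 2 < lowerDarboux f a b)
    obtain ⟨U, ⟨m, y, hQ, rfl⟩, hU⟩ :=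
      exists_lt_of_csInf_lt hSUne (by rw [← hEq]; linarith [mul_pos hε hη] :
        upperDarboux f a b < V + ε * η / 2)
    have hdiff : upperSum f m y - lowerSum f n x < ε * η := by linarith
    obtain ⟨hx0, hxn, hx⟩ := hP
    obtain ⟨hy0, hym, hy⟩ := hQ
    have hn0 : 0 < n := by
      rcases Nat.eq_zero_or_pos n with rfl | h
      · exact absurd (hx0 ▸ hxn : a = b) (ne_of_lt hab)
      · exact h
    have hm0 : 0 < m := by
      rcases Nat.eq_zero_or_pos m with rfl | h
      · exact absurd (hy0 ▸ hym : a = b) (ne_of_lt hab)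
      · exact h
    have hsubx : ∀ i < n, Set.Icc (x i) (x (i+1)) ⊆ Set.Icc a b := by
      intro i hi
      apply Set.Icc_subset_Icc
      · rw [← hx0]; exact partition_mono hx i (by omega) 0 (by omega)
      · rw [← hxn]; exact partition_mono hx n le_rfl (i+1) (by omega)
    have hsuby : ∀ j < m, Set.Icc (y j) (y (j+1)) ⊆ Set.Icc a b := by
      intro j hj
      apply Set.Icc_subset_Icc
      · rw [← hy0]; exact partition_mono hy j (by omega) 0 (by omega)
      · rw [← hym]; exact partition_mono hy m le_rfl (j+1) (by omega)
    -- bad cells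
    set Bad : Finset (ℕ × ℕ) := (Finset.range n ×ˢ Finset.range m).filter
      (fun p => ε ≤ sSup (f '' Set.Icc (y p.2) (y (p.2+1)))
        - sInf (f '' Set.Icc (x p.1) (x (p.1+1)))) with hBad
    -- terms nonneg
    have hterm : ∀ i < n, ∀ j < m,
        0 ≤ (sSup (f '' Set.Icc (y j) (y (j+1))) - sInf (f '' Set.Icc (x i) (x (i+1)))) *
          cellLen (x i) (x (i+1)) (y j) (y (j+1)) := by
      intro i hi j hj
      rcases lt_or_eq_of_le (cellLen_nonneg (x i) (x (i+1)) (y j) (y (j+1))) with h | h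
      · have hz := cellLen_pos_mem h
        apply mul_nonneg _ (le_of_lt h)
        have h1 := sInf_le_f hM (hsubx i hi) hz.1
        have h2 := f_le_sSup hM (hsuby j hj) hz.2
        linarith
      · rw [← h, mul_zero]
    -- grid
    set G : Set ℝ := (x '' Set.Iic n) ∪ (y '' Set.Iic m) with hG
    have hGnull : volume G = 0 := by
      apply Set.Countable.measure_zero
      exact (((Set.finite_Iic n).image x).union ((Set.finite_Iic m).image y)).countable
    -- cover
    have hcover : B ⊆ G ∪ ⋃ p ∈ Bad,
        Set.Icc (max (x p.1) (y p.2)) (min (x (p.1+1)) (y (p.2+1))) := by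
      intro t ⟨htab, ht⟩
      by_cases htG : t ∈ G
      · exact Or.inl htG
      · right
        obtain ⟨i, hi, hxi, hxi1⟩ := exists_subinterval hx (hx0 ▸ htab.1) (hxn ▸ htab.2) hn0
        obtain ⟨j, hj, hyj, hyj1⟩ := exists_subinterval hy (hy0 ▸ htab.1) (hym ▸ htab.2) hm0
        have hne : ∀ k ≤ n, x k ≠ t := fun k hk he =>
          htG (Or.inl ⟨k, hk, he⟩)
        have hne' : ∀ k ≤ m, y k ≠ t := fun k hk he =>
          htG (Or.inr ⟨k, hk, he⟩)
        have h1 : x i < t := lt_of_le_of_ne hxi (hne i (by omega))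
        have h2 : t < x (i+1) := lt_of_le_of_ne hxi1 (Ne.symm (hne (i+1) (by omega)))
        have h3 : y j < t := lt_of_le_of_ne hyj (hne' j (by omega))
        have h4 : t < y (j+1) := lt_of_le_of_ne hyj1 (Ne.symm (hne' (j+1) (by omega)))
        set u := max (x i) (y j)
        set v := min (x (i+1)) (y (j+1))
        have hu : u < t := max_lt h1 h3
        have hv : t < v := lt_min h2 h4
        obtain ⟨s, hsab, hst, hfs⟩ := ht (min (t - u) (v - t)) (by
          apply lt_min <;> linarith)
        have hsu : u < s := by
          have := abs_lt.mp hst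
          have := min_le_left (t - u) (v - t)
          linarith
        have hsv : s < v := by
          have := abs_lt.mp hst
          have := min_le_right (t - u) (v - t)
          linarith
        have hmemt : t ∈ Set.Icc u v := ⟨le_of_lt hu, le_of_lt hv⟩
        have hmems : s ∈ Set.Icc u v := ⟨le_of_lt hsu, le_of_lt hsv⟩
        have hsubu : Set.Icc u v ⊆ Set.Icc (x i) (x (i+1)) :=
          Set.Icc_subset_Icc (le_max_left _ _) (min_le_left _ _)
        have hsubv : Set.Icc u v ⊆ Set.Icc (y j) (y (j+1)) :=
          Set.Icc_subset_Icc (le_max_right _ _) (min_le_right _ _)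
        have hbad : ε ≤ sSup (f '' Set.Icc (y j) (y (j+1)))
            - sInf (f '' Set.Icc (x i) (x (i+1))) := by
          have i1 := sInf_le_f hM (hsubx i hi) (hsubu hmemt)
          have i2 := sInf_le_f hM (hsubx i hi) (hsubu hmems)
          have s1 := f_le_sSup hM (hsuby j hj) (hsubv hmemt)
          have s2 := f_le_sSup hM (hsuby j hj) (hsubv hmems)
          rcases le_total (f s) (f t) with h | h
          · rw [abs_of_nonpos (by linarith : f s - f t ≤ 0)] at hfs; linarith
          · rw [abs_of_nonneg (by linarith : 0 ≤ f s - f t)] at hfs; linarith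
        have hpBad : ((i, j) : ℕ × ℕ) ∈ Bad := by
          simp only [hBad, Finset.mem_filter, Finset.mem_product, Finset.mem_range]
          exact ⟨⟨hi, hj⟩, hbad⟩
        exact Set.mem_biUnion hpBad hmemt
    -- measure bound
    have hsum : ∑ p ∈ Bad, cellLen (x p.1) (x (p.1+1)) (y p.2) (y (p.2+1)) ≤ η := by
      have h1 : ε * ∑ p ∈ Bad, cellLen (x p.1) (x (p.1+1)) (y p.2) (y (p.2+1)) ≤
          ∑ p ∈ Bad, (sSup (f '' Set.Icc (y p.2) (y (p.2+1)))
            - sInf (f '' Set.Icc (x p.1) (x (p.1+1)))) *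
              cellLen (x p.1) (x (p.1+1)) (y p.2) (y (p.2+1)) := by
        rw [Finset.mul_sum]
        apply Finset.sum_le_sum
        intro p hp
        simp only [hBad, Finset.mem_filter] at hp
        exact mul_le_mul_of_nonneg_right hp.2 (cellLen_nonneg _ _ _ _)
      have h2 : ∑ p ∈ Bad, (sSup (f '' Set.Icc (y p.2) (y (p.2+1)))
            - sInf (f '' Set.Icc (x p.1) (x (p.1+1)))) *
              cellLen (x p.1) (x (p.1+1)) (y p.2) (y (p.2+1)) ≤
          upperSum f m y - lowerSum f n x := by
        rw [cross_sum ⟨hx0, hxn, hx⟩ ⟨hy0, hym, hy⟩, ← Finset.sum_product']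
        apply Finset.sum_le_sum_of_subset_of_nonneg (Finset.filter_subset _ _)
        intro p hp _
        simp only [Finset.mem_product, Finset.mem_range] at hp
        exact hterm p.1 hp.1 p.2 hp.2
      nlinarith [mul_pos hε hη]
    calc volume B ≤ volume (G ∪ ⋃ p ∈ Bad,
        Set.Icc (max (x p.1) (y p.2)) (min (x (p.1+1)) (y (p.2+1)))) := measure_mono hcover
      _ ≤ volume G + volume (⋃ p ∈ Bad,
        Set.Icc (max (x p.1) (y p.2)) (min (x (p.1+1)) (y (p.2+1)))) := measure_union_le _ _
      _ ≤ 0 + ∑ p ∈ Bad, volume (Set.Icc (max (x p.1) (y p.2))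
          (min (x (p.1+1)) (y (p.2+1)))) := by
          rw [hGnull]
          exact add_le_add le_rfl (measure_biUnion_finset_le _ _)
      _ ≤ ∑ p ∈ Bad, ENNReal.ofReal (cellLen (x p.1) (x (p.1+1)) (y p.2) (y (p.2+1))) := by
          rw [zero_add]
          apply Finset.sum_le_sum
          intro p _
          rw [Real.volume_Icc]
          exact ENNReal.ofReal_le_ofReal (le_max_right _ _)
      _ = ENNReal.ofReal (∑ p ∈ Bad, cellLen (x p.1) (x (p.1+1)) (y p.2) (y (p.2+1))) :=
          (ENNReal.ofReal_sum_of_nonneg (fun p _ => cellLen_nonneg _ _ _ _)).symm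
      _ ≤ ENNReal.ofReal η := ENNReal.ofReal_le_ofReal hsum
  -- conclude
  refine le_antisymm ?_ zero_le
  refine ENNReal.le_of_forall_pos_le_add fun δ hδ _ => ?_
  rw [zero_add]
  calc volume B ≤ ENNReal.ofReal δ := key δ (by exact_mod_cast hδ)
    _ = (δ : ENNReal) := ENNReal.ofReal_coe_nnreal


/-- If `f` is Riemann integrable on `[a, b]` and `F` is a generalized primitive of `f`,
then `F' = f` almost everywhere on `[a, b]`. -/
theorem genPrimitive_deriv_ae (a b : ℝ) (hab : a ≤ b) (f F : ℝ → ℝ)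
    (hf : RiemannIntegrableOn f a b) (hF : IsGenPrimitive a b f F) :
    ∀ᵐ x ∂MeasureTheory.volume, x ∈ Set.Icc a b →
      HasDerivWithinAt F (f x) (Set.Icc a b) x := by
  rcases eq_or_lt_of_le hab with rfl | hab'
  · have h0 : volume (Set.Icc a a) = 0 := by simp
    filter_upwards [measure_eq_zero_iff_ae_notMem.mp h0] with t ht htmem
    exact absurd htmem ht
  obtain ⟨M, hM⟩ := hf.1
  set B : Set ℝ := ⋃ k : ℕ, {t | t ∈ Set.Icc a b ∧ ∀ δ > 0, ∃ s ∈ Set.Icc a b,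
      |s - t| < δ ∧ 1/((k:ℝ)+1) < |f s - f t|} with hBdef
  have hBnull : volume B = 0 := by
    refine le_antisymm ((measure_iUnion_le _).trans ?_) zero_le
    have : ∀ k : ℕ, volume {t | t ∈ Set.Icc a b ∧ ∀ δ > 0, ∃ s ∈ Set.Icc a b,
        |s - t| < δ ∧ 1/((k:ℝ)+1) < |f s - f t|} = 0 :=
      fun k => null_bad hab' hf (by positivity)
    rw [ENNReal.tsum_eq_zero.mpr this]
  filter_upwards [measure_eq_zero_iff_ae_notMem.mp hBnull] with t htB htab
  have hcont : ∀ ε > 0, ∃ δ > 0, ∀ s ∈ Set.Icc a b, |s - t| < δ → |f s - f t| ≤ ε := by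
    intro ε hε
    obtain ⟨k, hk⟩ := exists_nat_one_div_lt hε
    have h1 : ¬(t ∈ Set.Icc a b ∧ ∀ δ > 0, ∃ s ∈ Set.Icc a b,
        |s - t| < δ ∧ 1/((k:ℝ)+1) < |f s - f t|) :=
      fun h => htB (Set.mem_iUnion.mpr ⟨k, h⟩)
    push_neg at h1
    obtain ⟨δ, hδ, h3⟩ := h1 htab
    exact ⟨δ, hδ, fun s hs hst => le_trans (h3 s hs hst) (le_of_lt hk)⟩
  rw [hasDerivWithinAt_iff_tendsto_slope, Metric.tendsto_nhdsWithin_nhds]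
  intro ε hε
  obtain ⟨δ, hδ, hc⟩ := hcont (ε/2) (by linarith)
  refine ⟨δ, hδ, fun s hs hst => ?_⟩
  obtain ⟨hsab, hsne⟩ := hs
  rw [Real.dist_eq] at hst
  have hsne' : s ≠ t := by simpa using hsne
  rw [Real.dist_eq]
  rcases lt_or_gt_of_ne hsne' with h | h
  · -- s < t
    have hsub : Set.Icc s t ⊆ Set.Icc a b := Set.Icc_subset_Icc hsab.1 htab.2
    obtain ⟨hlo, hhi⟩ := hF s hsab t htab h
    rw [abs_of_nonpos (by linarith : s - t ≤ 0)] at hst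
    have hinf : f t - ε/2 ≤ sInf (f '' Set.Icc s t) := by
      apply le_csInf (img_ne (le_of_lt h))
      rintro r ⟨z, hz, rfl⟩
      have hzt : |z - t| < δ := by
        rw [abs_of_nonpos (by linarith [hz.2] : z - t ≤ 0)]
        linarith [hz.1]
      have := abs_le.mp (hc z (hsub hz) hzt)
      linarith [this.1]
    have hsup : sSup (f '' Set.Icc s t) ≤ f t + ε/2 := by
      apply csSup_le (img_ne (le_of_lt h))
      rintro r ⟨z, hz, rfl⟩
      have hzt : |z - t| < δ := by
        rw [abs_of_nonpos (by linarith [hz.2] : z - t ≤ 0)]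
        linarith [hz.1]
      have := abs_le.mp (hc z (hsub hz) hzt)
      linarith [this.2]
    rw [slope_comm, slope_def_field, abs_lt]
    constructor <;> linarith
  · -- t < s
    have hsub : Set.Icc t s ⊆ Set.Icc a b := Set.Icc_subset_Icc htab.1 hsab.2
    obtain ⟨hlo, hhi⟩ := hF t htab s hsab h
    rw [abs_of_nonneg (by linarith : (0:ℝ) ≤ s - t)] at hst
    have hinf : f t - ε/2 ≤ sInf (f '' Set.Icc t s) := by
      apply le_csInf (img_ne (le_of_lt h))
      rintro r ⟨z, hz, rfl⟩
      have hzt : |z - t| < δ := by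
        rw [abs_of_nonneg (by linarith [hz.1] : (0:ℝ) ≤ z - t)]
        linarith [hz.2]
      have := abs_le.mp (hc z (hsub hz) hzt)
      linarith [this.1]
    have hsup : sSup (f '' Set.Icc t s) ≤ f t + ε/2 := by
      apply csSup_le (img_ne (le_of_lt h))
      rintro r ⟨z, hz, rfl⟩
      have hzt : |z - t| < δ := by
        rw [abs_of_nonneg (by linarith [hz.1] : (0:ℝ) ≤ z - t)]
        linarith [hz.2]
      have := abs_le.mp (hc z (hsub hz) hzt)
      linarith [this.2]
    rw [slope_def_field, abs_lt]
    constructor <;> linarith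
end
end
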